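/- arXiv:1812.10229 — 6 statements merged into one kernel-verified Lean document; each statement's English description precedes it below -/
import Mathlib

section
/- Let f(x;z) = f(x) + (p/2)‖x - z‖², assumed strongly convex in x with modulus p+γ > 0 on a compact convex set C. Define x*(z) = argmin_{x ∈ C} f(x;z). Then for all z, z', ‖x*(z) - x*(z')‖ ≤ (p/(p+γ))‖z - z'‖, i.e., the proximal-type argmin map is Lipschitz in the center z with constant p/(p+γ). -/
open Filter Topology

lemma growth_aux {E : Type*} [NormedAddCommGroup E] [InnerProductSpace ℝ E]
    {C : Set E} {m : ℝ} {g : E → ℝ} {u : E}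
    (hsc : StrongConvexOn C m g) (hu : u ∈ C) (hmin : IsMinOn g C u)
    {y : E} (hy : y ∈ C) : g u + m / 2 * ‖y - u‖ ^ 2 ≤ g y := by
  set K := m / 2 * ‖y - u‖ ^ 2 with hK
  have key : ∀ t : ℝ, t ∈ Set.Ioo (0:ℝ) 1 → g u + (1 - t) * K ≤ g y := by
    intro t ht
    have h1 : (0:ℝ) ≤ t := le_of_lt ht.1
    have h2 : (0:ℝ) ≤ 1 - t := by linarith [ht.2]
    have hab : t + (1 - t) = 1 := by ring
    have hcvx := hsc.2 hy hu h1 h2 hab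
    have hmem : t • y + (1 - t) • u ∈ C := hsc.1 hy hu h1 h2 hab
    have hmin' := hmin hmem
    simp only [smul_eq_mul] at hcvx
    have : g u ≤ t * g y + (1 - t) * g u - t * (1 - t) * (m / 2 * ‖y - u‖ ^ 2) := by
      calc g u ≤ g (t • y + (1 - t) • u) := hmin'
        _ ≤ t * g y + (1 - t) * g u - t * (1 - t) * (m / 2 * ‖y - u‖ ^ 2) := by
            have := hcvx; nlinarith [this]
    have ht0 : 0 < t := ht.1
    rw [hK]
    nlinarith [this]
  have htend : Tendsto (fun t : ℝ => g u + (1 - t) * K) (𝓝[>] (0:ℝ)) (𝓝 (g u + K)) := by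
    have : Tendsto (fun t : ℝ => g u + (1 - t) * K) (𝓝 (0:ℝ)) (𝓝 (g u + (1 - 0) * K)) := by
      apply Tendsto.add tendsto_const_nhds
      exact (Tendsto.sub tendsto_const_nhds tendsto_id).mul tendsto_const_nhds
    simpa using this.mono_left nhdsWithin_le_nhds
  refine le_of_tendsto htend ?_
  filter_upwards [Ioo_mem_nhdsGT_of_mem (by norm_num : (0:ℝ) ∈ Set.Ico (0:ℝ) 1)] with t ht
  exact key t ht

/-- Lipschitz continuity of the proximal-type argmin map `z ↦ x*(z)` with constant `p/(p+γ)`. -/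
theorem stmt1 {n : ℕ} (f : EuclideanSpace ℝ (Fin n) → ℝ)
    (C : Set (EuclideanSpace ℝ (Fin n))) (p γ : ℝ)
    (xstar : EuclideanSpace ℝ (Fin n) → EuclideanSpace ℝ (Fin n))
    (hf : Differentiable ℝ f)
    (hCne : C.Nonempty) (hCcpt : IsCompact C) (hCcvx : Convex ℝ C)
    (hp : 0 < p) (hpγ : 0 < p + γ)
    (hsc : ∀ z, StrongConvexOn C (p + γ) (fun x => f x + p / 2 * ‖x - z‖ ^ 2))
    (hxs : ∀ z, xstar z ∈ C ∧ IsMinOn (fun x => f x + p / 2 * ‖x - z‖ ^ 2) C (xstar z)) :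
    ∀ z z', ‖xstar z - xstar z'‖ ≤ p / (p + γ) * ‖z - z'‖ := by
  intro z z'
  set u := xstar z
  set v := xstar z'
  obtain ⟨huC, humin⟩ := hxs z
  obtain ⟨hvC, hvmin⟩ := hxs z'
  have h1 := growth_aux (hsc z) huC humin hvC
  have h2 := growth_aux (hsc z') hvC hvmin huC
  have hnorm : ‖v - u‖ = ‖u - v‖ := norm_sub_rev _ _
  -- sum and cancel f
  have hsum : (p + γ) * ‖u - v‖ ^ 2 ≤
      p / 2 * ‖v - z‖ ^ 2 - p / 2 * ‖u - z‖ ^ 2 + p / 2 * ‖u - z'‖ ^ 2 - p / 2 * ‖v - z'‖ ^ 2 := by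
    rw [hnorm] at h1
    nlinarith [h1, h2]
  have hident : ‖v - z‖ ^ 2 - ‖u - z‖ ^ 2 + ‖u - z'‖ ^ 2 - ‖v - z'‖ ^ 2
      = 2 * inner ℝ (u - v) (z - z') := by
    have e1 := @norm_sub_sq_real (EuclideanSpace ℝ (Fin n)) _ _ v z
    have e2 := @norm_sub_sq_real (EuclideanSpace ℝ (Fin n)) _ _ u z
    have e3 := @norm_sub_sq_real (EuclideanSpace ℝ (Fin n)) _ _ u z'
    have e4 := @norm_sub_sq_real (EuclideanSpace ℝ (Fin n)) _ _ v z'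
    have expand : (inner ℝ (u - v) (z - z') : ℝ)
        = inner ℝ u z - inner ℝ u z' - inner ℝ v z + inner ℝ v z' := by
      rw [inner_sub_left, inner_sub_right, inner_sub_right]; ring
    rw [e1, e2, e3, e4, expand]; ring
  have hineq : (p + γ) * ‖u - v‖ ^ 2 ≤ p * inner ℝ (u - v) (z - z') := by
    nlinarith [hsum, hident]
  have hcs : (inner ℝ (u - v) (z - z') : ℝ) ≤ ‖u - v‖ * ‖z - z'‖ :=
    real_inner_le_norm _ _
  have hfinal : (p + γ) * ‖u - v‖ ^ 2 ≤ p * (‖u - v‖ * ‖z - z'‖) := by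
    nlinarith [hineq, hcs]
  rcases eq_or_lt_of_le (norm_nonneg (u - v)) with h0 | h0
  · rw [← h0]
    positivity
  · rw [div_mul_eq_mul_div, le_div_iff₀ hpγ]
    nlinarith [hfinal, h0]
end

section
/- With M(z) = min_{x∈C, Ax=b} (f(x) + (p/2)‖x-z‖²), x*(z) its minimizer, and assuming z ↦ x*(z) is Lipschitz with constant p/(p+γ), M satisfies the descent estimate M(z') - M(z) ≤ p⟨z' - z, z - x*(z)⟩ + (p L̃/2)‖z - z'‖² for all z, z', where L̃ = p/(p+γ) + 1. Equivalently, ∇M is Lipschitz with constant p·L̃. -/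
/-- Proximal descent: `M(z') - M(z) ≤ p⟨z' - z, z - x*(z)⟩ + (p L̃/2)‖z - z'‖²` with
`L̃ = p/(p+γ) + 1`; equivalently `∇M` is Lipschitz with constant `p·L̃`. -/
theorem stmt8 {n : ℕ} (M : EuclideanSpace ℝ (Fin n) → ℝ)
    (xstar : EuclideanSpace ℝ (Fin n) → EuclideanSpace ℝ (Fin n)) (p γ : ℝ)
    (hp : 0 < p) (hpγ : 0 < p + γ)
    (hgrad : ∀ z, HasGradientAt M (p • (z - xstar z)) z)
    (hLip : ∀ z z', ‖xstar z - xstar z'‖ ≤ p / (p + γ) * ‖z - z'‖) :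
    (∀ z z', M z' - M z ≤ p * (inner ℝ (z' - z) (z - xstar z) : ℝ)
        + p * (p / (p + γ) + 1) / 2 * ‖z - z'‖ ^ 2) ∧
    (∀ z z', ‖p • (z - xstar z) - p • (z' - xstar z')‖
        ≤ p * (p / (p + γ) + 1) * ‖z - z'‖) := by
  set L : ℝ := p * (p / (p + γ) + 1) with hL
  have hL0 : 0 ≤ L := by positivity
  -- Part 2: Lipschitz gradient
  have part2 : ∀ z z', ‖p • (z - xstar z) - p • (z' - xstar z')‖ ≤ L * ‖z - z'‖ := by
    intro z z'
    have h1 : p • (z - xstar z) - p • (z' - xstar z')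
        = p • ((z - z') + (xstar z' - xstar z)) := by
      rw [← smul_sub]; congr 1; abel
    rw [h1, norm_smul, Real.norm_eq_abs, abs_of_pos hp]
    have h2 : ‖(z - z') + (xstar z' - xstar z)‖ ≤ ‖z - z'‖ + ‖xstar z' - xstar z‖ :=
      norm_add_le _ _
    have h3 : ‖xstar z' - xstar z‖ ≤ p / (p + γ) * ‖z' - z‖ := hLip z' z
    rw [norm_sub_rev z' z] at h3
    nlinarith [norm_nonneg (z - z'), norm_nonneg (xstar z' - xstar z)]
  refine ⟨?_, part2⟩
  intro z z'
  set v := z' - z with hv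
  -- derivative of t ↦ M (z + t • v)
  have hgderiv : ∀ t : ℝ, HasDerivAt (fun s : ℝ => M (z + s • v))
      ((inner ℝ (p • ((z + t • v) - xstar (z + t • v))) v : ℝ)) t := by
    intro t
    have hline : HasDerivAt (fun s : ℝ => z + s • v) v t := by
      simpa using ((hasDerivAt_id t).smul_const v).const_add z
    have hF := (hgrad (z + t • v)).hasFDerivAt
    have := hF.comp_hasDerivAt t hline
    simpa only [InnerProductSpace.toDual_apply_apply, Function.comp_def] using this
  set c : ℝ := (inner ℝ (p • (z - xstar z)) v : ℝ) with hc
  set h : ℝ → ℝ := fun t => M (z + t • v) - t * c - L / 2 * t ^ 2 * ‖v‖ ^ 2 with hh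
  have hhderiv : ∀ t : ℝ, HasDerivAt h
      ((inner ℝ (p • ((z + t • v) - xstar (z + t • v))) v : ℝ) - c - L * t * ‖v‖ ^ 2) t := by
    intro t
    have h1 : HasDerivAt (fun s : ℝ => s * c) c t := by
      simpa using (hasDerivAt_id t).mul_const c
    have h2 : HasDerivAt (fun s : ℝ => L / 2 * s ^ 2 * ‖v‖ ^ 2) (L * t * ‖v‖ ^ 2) t := by
      have := ((hasDerivAt_pow 2 t).const_mul (L / 2)).mul_const (‖v‖ ^ 2)
      refine this.congr_deriv ?_
      show L / 2 * (((2:ℕ):ℝ) * t ^ 1) * ‖v‖ ^ 2 = L * t * ‖v‖ ^ 2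
      push_cast
      ring
    exact ((hgderiv t).sub h1).sub h2
  have hd_nonpos : ∀ t ∈ Set.Icc (0:ℝ) 1,
      (inner ℝ (p • ((z + t • v) - xstar (z + t • v))) v : ℝ) - c - L * t * ‖v‖ ^ 2 ≤ 0 := by
    intro t ht
    have hdiff : (inner ℝ (p • ((z + t • v) - xstar (z + t • v))) v : ℝ) - c
        = (inner ℝ (p • ((z + t • v) - xstar (z + t • v)) - p • (z - xstar z)) v : ℝ) := by
      rw [inner_sub_left]
    rw [hdiff]
    have hcs := real_inner_le_norm (p • ((z + t • v) - xstar (z + t • v)) - p • (z - xstar z)) v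
    have hlip := part2 (z + t • v) z
    have hz : ‖(z + t • v) - z‖ = t * ‖v‖ := by
      have : (z + t • v) - z = t • v := by abel
      rw [this, norm_smul, Real.norm_eq_abs, abs_of_nonneg ht.1]
    rw [hz] at hlip
    have : (inner ℝ (p • ((z + t • v) - xstar (z + t • v)) - p • (z - xstar z)) v : ℝ)
        ≤ L * (t * ‖v‖) * ‖v‖ :=
      hcs.trans (by
        have := mul_le_mul_of_nonneg_right hlip (norm_nonneg v)
        linarith)
    nlinarith
  have hanti : AntitoneOn h (Set.Icc (0:ℝ) 1) := by
    apply antitoneOn_of_deriv_nonpos (convex_Icc 0 1)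
    · exact (Differentiable.continuous (fun t => (hhderiv t).differentiableAt)).continuousOn
    · intro t _
      exact ((hhderiv t).differentiableAt).differentiableWithinAt
    · intro t ht
      rw [interior_Icc] at ht
      rw [(hhderiv t).deriv]
      exact hd_nonpos t ⟨ht.1.le, ht.2.le⟩
  have key : h 1 ≤ h 0 := hanti (by norm_num) (by norm_num) (by norm_num)
  simp only [hh, one_smul, zero_smul, add_zero, one_mul, zero_mul, one_pow, mul_one] at key
  have hz1 : z + v = z' := by rw [hv]; abel
  rw [hz1] at key
  have hcval : c = p * (inner ℝ (z' - z) (z - xstar z) : ℝ) := by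
    rw [hc, real_inner_smul_left, real_inner_comm]
  have hnv : ‖v‖ = ‖z - z'‖ := by rw [hv, norm_sub_rev]
  rw [hcval, hnv] at key
  linarith
end

section
/- (Hoffman bound) Let A ∈ ℝ^{m×n}, C ∈ ℝ^{k×n}, b ∈ ℝᵐ, d ∈ ℝᵏ, and suppose S = {x : Ax ≤ b, Cx = d} is nonempty. Then there exists a constant θ > 0 depending only on A and C such that for every x̄ ∈ ℝⁿ, dist(x̄, S)² ≤ θ²(‖(Ax̄ - b)₊‖² + ‖Cx̄ - d‖²), where (·)₊ denotes componentwise positive part. -/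
open Finset Metric
open scoped InnerProductSpace

namespace HoffmanAux

variable {n : ℕ} {ι : Type*} [Fintype ι] [DecidableEq ι]

lemma normsq {κ : Type*} [Fintype κ] (y : EuclideanSpace ℝ κ) : ‖y‖ ^ 2 = ∑ i, y i ^ 2 := by
  rw [EuclideanSpace.norm_eq, Real.sq_sqrt (by positivity)]
  simp [sq_abs]

/-- The linear map sending coefficients supported on `J` to the corresponding
linear combination of the vectors `a`. -/
noncomputable def combo (a : ι → EuclideanSpace ℝ (Fin n)) (J : Finset ι) :
    EuclideanSpace ℝ ↥J →ₗ[ℝ] EuclideanSpace ℝ (Fin n) where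
  toFun y := ∑ j, y j • a (j : ι)
  map_add' y z := by
    simp [PiLp.add_apply, add_smul, Finset.sum_add_distrib]
  map_smul' c y := by
    simp [PiLp.smul_apply, smul_smul, Finset.smul_sum]

lemma combo_eq (a : ι → EuclideanSpace ℝ (Fin n)) (J : Finset ι) (mu : ι → ℝ)
    (hmu : ∀ i ∉ J, mu i = 0) :
    combo a J (WithLp.toLp 2 (fun j => mu (j : ι))) = ∑ i, mu i • a i := by
  show ∑ j : ↥J, mu (j : ι) • a (j : ι) = ∑ i, mu i • a i
  rw [Finset.sum_coe_sort J (fun i => mu i • a i)]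
  exact Finset.sum_subset (Finset.subset_univ J)
    (fun i _ hi => by rw [hmu i hi, zero_smul])

lemma combo_ker (a : ι → EuclideanSpace ℝ (Fin n)) (J : Finset ι)
    (h : LinearIndependent ℝ (fun j : ↥J => a (j : ι))) :
    LinearMap.ker (combo a J) = ⊥ := by
  rw [LinearMap.ker_eq_bot']
  intro y hy
  have hz : ∀ j : ↥J, y j = 0 := Fintype.linearIndependent_iff.mp h y hy
  ext j
  simpa using hz j

lemma indep_bound (a : ι → EuclideanSpace ℝ (Fin n)) (J : Finset ι)
    (h : LinearIndependent ℝ (fun j : ↥J => a (j : ι))) :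
    ∃ c : ℝ, 0 < c ∧ ∀ mu : ι → ℝ, (∀ i ∉ J, mu i = 0) →
      ∑ i, mu i ^ 2 ≤ c ^ 2 * ‖∑ i, mu i • a i‖ ^ 2 := by
  set T := combo a J with hT
  have hinj : Function.Injective T := by
    rw [← LinearMap.ker_eq_bot]; exact combo_ker a J h
  let e := LinearEquiv.ofInjective T hinj
  let f : ↥(LinearMap.range T) →L[ℝ] EuclideanSpace ℝ ↥J :=
    LinearMap.toContinuousLinearMap e.symm.toLinearMap
  refine ⟨‖f‖ + 1, by positivity, ?_⟩
  intro mu hmu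
  have key : ∀ y : EuclideanSpace ℝ ↥J, ‖y‖ ≤ (‖f‖ + 1) * ‖T y‖ := by
    intro y
    have h1 : f (e y) = y := e.symm_apply_apply y
    have h2 : ‖(e y : EuclideanSpace ℝ (Fin n))‖ = ‖T y‖ := by
      congr 1
    calc ‖y‖ = ‖f (e y)‖ := by rw [h1]
      _ ≤ ‖f‖ * ‖(e y : EuclideanSpace ℝ (Fin n))‖ := f.le_opNorm _
      _ = ‖f‖ * ‖T y‖ := by rw [h2]
      _ ≤ (‖f‖ + 1) * ‖T y‖ :=
          mul_le_mul_of_nonneg_right (by linarith) (norm_nonneg _)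
  set y : EuclideanSpace ℝ ↥J := WithLp.toLp 2 (fun j => mu (j : ι)) with hy
  have hTy : T y = ∑ i, mu i • a i := combo_eq a J mu hmu
  have h3 : ∑ i, mu i ^ 2 = ‖y‖ ^ 2 := by
    rw [normsq]
    show ∑ i, mu i ^ 2 = ∑ j : ↥J, mu (j : ι) ^ 2
    rw [Finset.sum_coe_sort J (fun i => mu i ^ 2)]
    exact (Finset.sum_subset (Finset.subset_univ J)
      (fun i _ hi => by rw [hmu i hi]; ring)).symm
  have h4 : ‖y‖ ^ 2 ≤ ((‖f‖ + 1) * ‖T y‖) ^ 2 :=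
    pow_le_pow_left₀ (norm_nonneg _) (key y) 2
  rw [h3, ← hTy]
  calc ‖y‖ ^ 2 ≤ ((‖f‖ + 1) * ‖T y‖) ^ 2 := h4
    _ = (‖f‖ + 1) ^ 2 * ‖T y‖ ^ 2 := by ring

lemma conic_carath (a : ι → EuclideanSpace ℝ (Fin n)) :
    ∀ (N : ℕ) (lam : ι → ℝ), (∀ i, 0 ≤ lam i) → Set.ncard {i | lam i ≠ 0} ≤ N →
    ∃ mu : ι → ℝ, (∀ i, 0 ≤ mu i) ∧ (∀ i, mu i ≠ 0 → lam i ≠ 0) ∧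
      LinearIndependent ℝ (fun j : {i : ι // mu i ≠ 0} => a (j : ι)) ∧
      ∑ i, mu i • a i = ∑ i, lam i • a i := by
  intro N
  induction N with
  | zero =>
    intro lam hlam hcard
    have hemp : {i | lam i ≠ 0} = ∅ :=
      (Set.ncard_eq_zero (Set.toFinite _)).mp (Nat.le_zero.mp hcard)
    have hz : ∀ i, lam i = 0 := by
      intro i
      by_contra h
      exact (hemp ▸ (Set.mem_setOf.mpr h) : i ∈ (∅ : Set ι))
    refine ⟨lam, hlam, fun _ h => h, ?_, rfl⟩
    have : IsEmpty {i : ι // lam i ≠ 0} := ⟨fun j => j.2 (hz j.1)⟩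
    exact linearIndependent_empty_type
  | succ N ih =>
    intro lam hlam hcard
    classical
    by_cases hind : LinearIndependent ℝ (fun j : {i : ι // lam i ≠ 0} => a (j : ι))
    · exact ⟨lam, hlam, fun _ h => h, hind, rfl⟩
    · obtain ⟨g, hg0, j₀, hj₀⟩ := Fintype.not_linearIndependent_iff.mp hind
      obtain ⟨c, hcsupp, hcsum, i₁, hi₁⟩ : ∃ c : ι → ℝ, (∀ i, c i ≠ 0 → lam i ≠ 0) ∧
          (∑ i, c i • a i = 0) ∧ ∃ i, 0 < c i := by
        set c0 : ι → ℝ := fun i => if h : lam i ≠ 0 then g ⟨i, h⟩ else 0 with hc0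
        have hsupp : ∀ i, c0 i ≠ 0 → lam i ≠ 0 := by
          intro i h
          by_contra hh
          exact h (by simp [hc0, hh])
        have hsum : ∑ i, c0 i • a i = 0 := by
          have e1 : ∑ i, c0 i • a i = ∑ i ∈ univ.filter (fun i => lam i ≠ 0), c0 i • a i :=
            (Finset.sum_subset (filter_subset _ _) (fun i _ hi => by
              have : ¬ lam i ≠ 0 := by simpa using hi
              simp [hc0, this])).symm
          have e2 : ∑ i ∈ univ.filter (fun i => lam i ≠ 0), c0 i • a i
              = ∑ j : {i : ι // lam i ≠ 0}, c0 (j : ι) • a (j : ι) :=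
            Finset.sum_subtype _ (by simp) _
          have e3 : ∑ j : {i : ι // lam i ≠ 0}, c0 (j : ι) • a (j : ι)
              = ∑ j : {i : ι // lam i ≠ 0}, g j • a (j : ι) := by
            refine Finset.sum_congr rfl fun j _ => ?_
            have : c0 (j : ι) = g j := by
              rw [hc0]
              simp only [dif_pos j.2]
            rw [this]
          rw [e1, e2, e3, hg0]
        by_cases hpos : ∃ i, 0 < c0 i
        · exact ⟨c0, hsupp, hsum, hpos⟩
        · push_neg at hpos
          have hne : c0 (j₀ : ι) ≠ 0 := by
            have : c0 (j₀ : ι) = g j₀ := by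
              rw [hc0]; simp only [dif_pos j₀.2]
            rw [this]; exact hj₀
          refine ⟨-c0, fun i h => hsupp i (by simpa using h), by
            simp only [Pi.neg_apply, neg_smul, Finset.sum_neg_distrib, hsum, neg_zero], ?_⟩
          exact ⟨j₀, by simpa using lt_of_le_of_ne (hpos j₀) hne⟩
      set T := univ.filter (fun i => 0 < c i) with hT
      have hTne : T.Nonempty := ⟨i₁, by simp [hT, hi₁]⟩
      set t := T.inf' hTne (fun i => lam i / c i) with ht
      have ht0 : 0 ≤ t := by
        rw [ht]
        apply Finset.le_inf'
        intro i hi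
        have : 0 < c i := (Finset.mem_filter.mp hi).2
        exact div_nonneg (hlam i) this.le
      obtain ⟨i₀, hi₀T, hi₀⟩ := Finset.exists_mem_eq_inf' hTne (fun i => lam i / c i)
      have hci₀ : 0 < c i₀ := (Finset.mem_filter.mp hi₀T).2
      set lam' : ι → ℝ := fun i => lam i - t * c i with hlam'
      have h0' : ∀ i, 0 ≤ lam' i := by
        intro i
        by_cases hc : 0 < c i
        · have h1 : t ≤ lam i / c i := by
            rw [ht]; exact Finset.inf'_le _ (by simp [hT, hc])
          have := (le_div_iff₀ hc).mp h1
          simp only [hlam']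
          linarith
        · push_neg at hc
          have : t * c i ≤ 0 := mul_nonpos_of_nonneg_of_nonpos ht0 hc
          simp only [hlam']
          linarith [hlam i]
      have hsupp' : ∀ i, lam' i ≠ 0 → lam i ≠ 0 := by
        intro i h hl
        apply h
        have hc : c i = 0 := by
          by_contra hc
          exact (hcsupp i hc) hl
        simp [hlam', hl, hc]
      have hzero : lam' i₀ = 0 := by
        have : t = lam i₀ / c i₀ := hi₀
        simp only [hlam', this]
        field_simp
        ring
      have hss : {i | lam' i ≠ 0} ⊂ {i | lam i ≠ 0} := by
        refine ⟨fun i h => hsupp' i h, fun hsub => ?_⟩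
        have h1 : lam i₀ ≠ 0 := hcsupp i₀ (ne_of_gt hci₀)
        exact (hsub h1) hzero
      have hcard' : Set.ncard {i | lam' i ≠ 0} ≤ N := by
        have h1 := Set.ncard_lt_ncard hss (Set.toFinite _)
        omega
      have hsum' : ∑ i, lam' i • a i = ∑ i, lam i • a i := by
        simp only [hlam', sub_smul, Finset.sum_sub_distrib]
        have : ∑ i, (t * c i) • a i = t • ∑ i, c i • a i := by
          rw [Finset.smul_sum]
          exact Finset.sum_congr rfl fun i _ => by rw [smul_smul]
        rw [this, hcsum, smul_zero, sub_zero]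
      obtain ⟨mu, h1, h2, h3, h4⟩ := ih lam' h0' hcard'
      exact ⟨mu, h1, fun i h => hsupp' i (h2 i h), h3, by rw [h4, hsum']⟩

lemma uniform_const (a : ι → EuclideanSpace ℝ (Fin n)) :
    ∃ θ : ℝ, 0 < θ ∧ ∀ mu : ι → ℝ,
      LinearIndependent ℝ (fun j : {i : ι // mu i ≠ 0} => a (j : ι)) →
      ∑ i, mu i ^ 2 ≤ θ ^ 2 * ‖∑ i, mu i • a i‖ ^ 2 := by
  classical
  have hc : ∀ J : Finset ι, ∃ c : ℝ, 0 < c ∧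
      (LinearIndependent ℝ (fun j : ↥J => a (j : ι)) → ∀ mu : ι → ℝ, (∀ i ∉ J, mu i = 0) →
        ∑ i, mu i ^ 2 ≤ c ^ 2 * ‖∑ i, mu i • a i‖ ^ 2) := by
    intro J
    by_cases h : LinearIndependent ℝ (fun j : ↥J => a (j : ι))
    · obtain ⟨c, hc, hb⟩ := indep_bound a J h
      exact ⟨c, hc, fun _ => hb⟩
    · exact ⟨1, one_pos, fun h' => absurd h' h⟩
  choose c hc1 hc2 using hc
  have hsum0 : 0 ≤ ∑ J : Finset ι, c J := Finset.sum_nonneg fun J _ => (hc1 J).le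
  refine ⟨1 + ∑ J : Finset ι, c J, by linarith, ?_⟩
  intro mu hmu
  set J := univ.filter (fun i => mu i ≠ 0) with hJ
  have hindJ : LinearIndependent ℝ (fun j : ↥J => a (j : ι)) := by
    let e : {i : ι // mu i ≠ 0} ≃ ↥J := Equiv.subtypeEquivRight (fun i => by simp [hJ])
    have hco : (fun j : ↥J => a (j : ι))
        = (fun i : {i : ι // mu i ≠ 0} => a (i : ι)) ∘ e.symm := by
      funext j; rfl
    rw [hco]
    exact hmu.comp e.symm e.symm.injective
  have hmem : ∀ i ∉ J, mu i = 0 := by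
    intro i hi
    by_contra h
    exact hi (by simp [hJ, h])
  refine (hc2 J hindJ mu hmem).trans
    (mul_le_mul_of_nonneg_right (pow_le_pow_left₀ (hc1 J).le ?_ 2) (by positivity))
  have : c J ≤ ∑ K : Finset ι, c K := Finset.single_le_sum (fun K _ => (hc1 K).le) (mem_univ J)
  linarith

/-- The convex cone of nonnegative combinations of the vectors `a i`, `i ∈ I`. -/
noncomputable def posCone (a : ι → EuclideanSpace ℝ (Fin n)) (I : Set ι) :
    ConvexCone ℝ (EuclideanSpace ℝ (Fin n)) where
  carrier := {x | ∃ lam : ι → ℝ, (∀ i, 0 ≤ lam i) ∧ (∀ i, lam i ≠ 0 → i ∈ I) ∧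
    x = ∑ i, lam i • a i}
  smul_mem' := by
    rintro r hr x ⟨lam, h0, hsupp, rfl⟩
    refine ⟨fun i => r * lam i, fun i => mul_nonneg hr.le (h0 i),
      fun i h => hsupp i (fun hl => h (by show r * lam i = 0; rw [hl, mul_zero])), ?_⟩
    rw [Finset.smul_sum]
    exact Finset.sum_congr rfl fun i _ => by rw [smul_smul]
  add_mem' := by
    rintro x ⟨lam, h0, hs, rfl⟩ y ⟨mu, h0', hs', rfl⟩
    refine ⟨fun i => lam i + mu i, fun i => add_nonneg (h0 i) (h0' i), fun i h => ?_,
      by simp [add_smul, Finset.sum_add_distrib]⟩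
    by_cases hl : lam i = 0
    · exact hs' i (fun hm => h (by show lam i + mu i = 0; rw [hl, hm, add_zero]))
    · exact hs i hl

lemma mem_posCone {a : ι → EuclideanSpace ℝ (Fin n)} {I : Set ι}
    {x : EuclideanSpace ℝ (Fin n)} :
    x ∈ posCone a I ↔ ∃ lam : ι → ℝ, (∀ i, 0 ≤ lam i) ∧ (∀ i, lam i ≠ 0 → i ∈ I) ∧
      x = ∑ i, lam i • a i := Iff.rfl

lemma posCone_isClosed (a : ι → EuclideanSpace ℝ (Fin n)) (I : Set ι) :
    IsClosed ((posCone a I : ConvexCone ℝ (EuclideanSpace ℝ (Fin n))) :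
      Set (EuclideanSpace ℝ (Fin n))) := by
  classical
  have horth : ∀ J : Finset ι, IsClosed {y : EuclideanSpace ℝ ↥J | ∀ j, 0 ≤ y j} := by
    intro J
    have : {y : EuclideanSpace ℝ ↥J | ∀ j, 0 ≤ y j} = ⋂ j, {y | 0 ≤ y j} := by
      ext y; simp
    rw [this]
    exact isClosed_iInter fun j => isClosed_le continuous_const
      ((EuclideanSpace.proj j : EuclideanSpace ℝ ↥J →L[ℝ] ℝ).continuous)
  have hrep : ((posCone a I : ConvexCone ℝ (EuclideanSpace ℝ (Fin n))) :
      Set (EuclideanSpace ℝ (Fin n))) =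
      ⋃ J ∈ {J : Finset ι | (↑J : Set ι) ⊆ I ∧
          LinearIndependent ℝ (fun j : ↥J => a (j : ι))},
        (combo a J) '' {y | ∀ j, 0 ≤ y j} := by
    ext x
    simp only [Set.mem_iUnion, Set.mem_image, Set.mem_setOf_eq, SetLike.mem_coe, mem_posCone]
    constructor
    · rintro ⟨lam, h0, hs, rfl⟩
      obtain ⟨mu, hmu0, hmusupp, hind, hsum⟩ :=
        conic_carath a (Set.ncard {i | lam i ≠ 0}) lam h0 le_rfl
      set J := univ.filter (fun i => mu i ≠ 0) with hJ
      have hoffJ : ∀ i ∉ J, mu i = 0 := by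
        intro i hi
        by_contra h
        exact hi (by simp [hJ, h])
      refine ⟨J, ⟨?_, ?_⟩, WithLp.toLp 2 (fun j => mu (j : ι)), fun j => hmu0 _, ?_⟩
      · intro i hi
        have : mu i ≠ 0 := by
          have := Finset.mem_coe.mp hi
          simpa [hJ] using this
        exact hs i (hmusupp i this)
      · let e : {i : ι // mu i ≠ 0} ≃ ↥J := Equiv.subtypeEquivRight (fun i => by simp [hJ])
        have hco : (fun j : ↥J => a (j : ι))
            = (fun i : {i : ι // mu i ≠ 0} => a (i : ι)) ∘ e.symm := by
          funext j; rfl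
        rw [hco]
        exact hind.comp e.symm e.symm.injective
      · rw [combo_eq a J mu hoffJ]
        exact hsum
    · rintro ⟨J, ⟨hJI, -⟩, y, hy, rfl⟩
      set mu : ι → ℝ := fun i => if h : i ∈ J then y ⟨i, h⟩ else 0 with hmu
      have hoffJ : ∀ i ∉ J, mu i = 0 := fun i hi => dif_neg hi
      have hres : WithLp.toLp 2 (fun j : ↥J => mu (j : ι)) = y := by
        ext j
        simp [hmu]
      refine ⟨mu, fun i => ?_, fun i h => ?_, ?_⟩
      · by_cases h : i ∈ J
        · rw [hmu]; simpa [dif_pos h] using hy ⟨i, h⟩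
        · rw [hmu]; simp [dif_neg h]
      · by_cases hiJ : i ∈ J
        · exact hJI hiJ
        · exact absurd (hoffJ i hiJ) h
      · rw [← combo_eq a J mu hoffJ, hres]
  rw [hrep]
  apply Set.Finite.isClosed_biUnion (Set.toFinite _)
  rintro J ⟨-, hind⟩
  exact ((combo a J).isClosedEmbedding_of_injective (combo_ker a J hind)).isClosedMap
    _ (horth J)

theorem hoffman_core (a : ι → EuclideanSpace ℝ (Fin n)) :
    ∃ θ : ℝ, 0 < θ ∧ ∀ b : ι → ℝ,
      {x : EuclideanSpace ℝ (Fin n) | ∀ i, ⟪a i, x⟫_ℝ ≤ b i}.Nonempty →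
      ∀ xbar : EuclideanSpace ℝ (Fin n),
        infDist xbar {x : EuclideanSpace ℝ (Fin n) | ∀ i, ⟪a i, x⟫_ℝ ≤ b i} ^ 2
          ≤ θ ^ 2 * ∑ i, max (⟪a i, xbar⟫_ℝ - b i) 0 ^ 2 := by
  classical
  obtain ⟨θ, hθ, hbound⟩ := uniform_const a
  refine ⟨θ, hθ, ?_⟩
  intro b hne xbar
  set S := {x : EuclideanSpace ℝ (Fin n) | ∀ i, ⟪a i, x⟫_ℝ ≤ b i} with hS
  have hclosed : IsClosed S := by
    have hSeq : S = ⋂ i, {x : EuclideanSpace ℝ (Fin n) | ⟪a i, x⟫_ℝ ≤ b i} := by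
      ext x; simp [hS]
    rw [hSeq]
    exact isClosed_iInter fun i =>
      isClosed_le (Continuous.inner continuous_const continuous_id) continuous_const
  obtain ⟨xs, hxsS, hxs⟩ := hclosed.exists_infDist_eq_dist hne xbar
  set v := xbar - xs with hv
  set I : Set ι := {i | ⟪a i, xs⟫_ℝ = b i} with hI
  have hvK : v ∈ posCone a I := by
    by_contra hvnK
    have hKne : ((posCone a I : ConvexCone ℝ (EuclideanSpace ℝ (Fin n))) :
        Set (EuclideanSpace ℝ (Fin n))).Nonempty := by
      refine ⟨0, ?_⟩
      show (0 : EuclideanSpace ℝ (Fin n)) ∈ posCone a I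
      exact mem_posCone.mpr ⟨fun _ => 0, fun _ => le_refl 0, fun _ h => absurd rfl h, by simp⟩
    obtain ⟨y, hy1, hy2⟩ := ProperCone.hyperplane_separation'
      (C := { toSubmodule := (posCone a I).toPointedCone
                (mem_posCone.mpr ⟨fun _ => 0, fun _ => le_refl 0, fun _ h => absurd rfl h, by simp⟩),
              isClosed' := posCone_isClosed a I }) (x₀ := v) hvnK
    replace hy2 : ⟪y, v⟫_ℝ < 0 := by rwa [real_inner_comm]
    set z := -y with hz
    have hvz : 0 < ⟪v, z⟫_ℝ := by
      rw [hz, inner_neg_right, real_inner_comm]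
      linarith
    have hzne : z ≠ 0 := by
      intro h
      rw [h, inner_zero_right] at hvz
      exact lt_irrefl 0 hvz
    have hznorm : (0 : ℝ) < ‖z‖ ^ 2 := pow_pos (norm_pos_iff.mpr hzne) 2
    set ε := ⟪v, z⟫_ℝ / ‖z‖ ^ 2 with hε
    have hε0 : 0 < ε := div_pos hvz hznorm
    set Tin := univ.filter (fun i => ⟪a i, xs⟫_ℝ < b i) with hTin
    set t := if h : Tin.Nonempty then
        min ε (Tin.inf' h (fun i => (b i - ⟪a i, xs⟫_ℝ) / (|⟪a i, z⟫_ℝ| + 1)))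
      else ε with htdef
    have ht0 : 0 < t := by
      rw [htdef]
      split
      · rename_i h
        apply lt_min hε0
        rw [Finset.lt_inf'_iff]
        intro i hi
        have hgap : ⟪a i, xs⟫_ℝ < b i := (Finset.mem_filter.mp hi).2
        have : (0:ℝ) < b i - ⟪a i, xs⟫_ℝ := by linarith
        positivity
      · exact hε0
    have htε : t ≤ ε := by
      rw [htdef]
      split
      · exact min_le_left _ _
      · exact le_refl ε
    have hfeas : xs + t • z ∈ S := by
      intro i
      have hexp : ⟪a i, xs + t • z⟫_ℝ = ⟪a i, xs⟫_ℝ + t * ⟪a i, z⟫_ℝ := by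
        rw [inner_add_right, real_inner_smul_right]
      show ⟪a i, xs + t • z⟫_ℝ ≤ b i
      rw [hexp]
      by_cases hi : ⟪a i, xs⟫_ℝ = b i
      · have hmem : a i ∈ posCone a I := by
          refine mem_posCone.mpr ⟨fun i' => if i' = i then 1 else 0,
            fun i' => by by_cases h : i' = i <;> simp [h], fun i' h => ?_, ?_⟩
          · have : i' = i := by
              by_contra hne'
              exact h (if_neg hne')
            rw [this, hI]
            exact Set.mem_setOf.mpr hi
          · simp [ite_smul]
        have hy0 : 0 ≤ ⟪a i, y⟫_ℝ := hy1 _ hmem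
        have hzneg : ⟪a i, z⟫_ℝ ≤ 0 := by
          rw [hz, inner_neg_right]
          linarith
        nlinarith
      · have hgap : ⟪a i, xs⟫_ℝ < b i := lt_of_le_of_ne (hxsS i) hi
        have hiT : i ∈ Tin := Finset.mem_filter.mpr ⟨mem_univ i, hgap⟩
        have hTne : Tin.Nonempty := ⟨i, hiT⟩
        have ht_le : t ≤ (b i - ⟪a i, xs⟫_ℝ) / (|⟪a i, z⟫_ℝ| + 1) := by
          rw [htdef, dif_pos hTne]
          exact le_trans (min_le_right _ _) (Finset.inf'_le _ hiT)
        have habs : (0:ℝ) < |⟪a i, z⟫_ℝ| + 1 := by positivity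
        have h1 : t * ⟪a i, z⟫_ℝ ≤ t * (|⟪a i, z⟫_ℝ| + 1) :=
          mul_le_mul_of_nonneg_left (by linarith [le_abs_self ⟪a i, z⟫_ℝ]) ht0.le
        have h2 : t * (|⟪a i, z⟫_ℝ| + 1) ≤ b i - ⟪a i, xs⟫_ℝ :=
          (le_div_iff₀ habs).mp ht_le
        linarith
    have hdec : dist xbar (xs + t • z) < dist xbar xs := by
      rw [dist_eq_norm, dist_eq_norm]
      have hexp : xbar - (xs + t • z) = v - t • z := by
        rw [hv]; abel
      apply lt_of_pow_lt_pow_left₀ 2 (norm_nonneg _)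
      rw [hexp, norm_sub_sq_real, real_inner_smul_right, norm_smul, mul_pow]
      have hnt : ‖t‖ ^ 2 = t ^ 2 := by
        rw [Real.norm_eq_abs, sq_abs]
      rw [hnt]
      have hkey : t * ‖z‖ ^ 2 ≤ ⟪v, z⟫_ℝ := by
        calc t * ‖z‖ ^ 2 ≤ ε * ‖z‖ ^ 2 := mul_le_mul_of_nonneg_right htε hznorm.le
          _ = ⟪v, z⟫_ℝ := by
              rw [hε, div_mul_cancel₀ _ hznorm.ne']
      have hvnorm : xbar - xs = v := rfl
      rw [hvnorm]
      nlinarith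
    have hle : infDist xbar S ≤ dist xbar (xs + t • z) := infDist_le_dist_of_mem hfeas
    rw [hxs] at hle
    exact absurd hle (not_le.mpr hdec)
  obtain ⟨lam, hlam0, hlamI, hlamsum⟩ := mem_posCone.mp hvK
  obtain ⟨mu, hmu0, hmusupp, hmuind, hmusum⟩ :=
    conic_carath a (Set.ncard {i | lam i ≠ 0}) lam hlam0 le_rfl
  have hrepr : ∑ i, mu i • a i = v := by rw [hmusum, ← hlamsum]
  have hdist : infDist xbar S = ‖v‖ := by rw [hxs, dist_eq_norm, hv]
  set r : ι → ℝ := fun i => max (⟪a i, xbar⟫_ℝ - b i) 0 with hr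
  have hr0 : ∀ i, 0 ≤ r i := fun i => le_max_right _ _
  have hkey : ‖v‖ ^ 2 ≤ ∑ i, mu i * r i := by
    have h1 : ‖v‖ ^ 2 = ⟪v, v⟫_ℝ := (real_inner_self_eq_norm_sq v).symm
    have h2 : ⟪v, v⟫_ℝ = ∑ i, mu i * ⟪a i, v⟫_ℝ := by
      nth_rewrite 1 [← hrepr]
      rw [sum_inner]
      exact Finset.sum_congr rfl fun i _ => real_inner_smul_left _ _ _
    rw [h1, h2]
    apply Finset.sum_le_sum
    intro i _
    by_cases hmu : mu i = 0
    · rw [hmu]; simp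
    · have hiI : i ∈ I := hlamI i (hmusupp i hmu)
      have hib : ⟪a i, xs⟫_ℝ = b i := hiI
      have hinner : ⟪a i, v⟫_ℝ = ⟪a i, xbar⟫_ℝ - b i := by
        rw [hv, inner_sub_right, hib]
      rw [hinner]
      exact mul_le_mul_of_nonneg_left (le_max_left _ _) (hmu0 i)
  have hCS : (∑ i, mu i * r i) ^ 2 ≤ (∑ i, mu i ^ 2) * (∑ i, r i ^ 2) :=
    Finset.sum_mul_sq_le_sq_mul_sq univ mu r
  have hmub := hbound mu hmuind
  rw [hrepr] at hmub
  have hrsum0 : 0 ≤ ∑ i, r i ^ 2 := Finset.sum_nonneg fun i _ => sq_nonneg _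
  rw [hdist]
  show ‖v‖ ^ 2 ≤ θ ^ 2 * ∑ i, r i ^ 2
  by_cases hv0 : ‖v‖ = 0
  · rw [hv0]
    have : (0:ℝ) ^ 2 = 0 := by ring
    rw [this]
    positivity
  · have hvpos : 0 < ‖v‖ := lt_of_le_of_ne (norm_nonneg v) (Ne.symm hv0)
    have h1 : (‖v‖ ^ 2) ^ 2 ≤ (∑ i, mu i * r i) ^ 2 :=
      pow_le_pow_left₀ (sq_nonneg _) hkey 2
    nlinarith [h1, hCS, mul_le_mul_of_nonneg_right hmub hrsum0, pow_pos hvpos 2]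

lemma maxsq (u : ℝ) : max u 0 ^ 2 + max (-u) 0 ^ 2 = u ^ 2 := by
  rcases le_total u 0 with h | h
  · rw [max_eq_right h, max_eq_left (by linarith)]; ring
  · rw [max_eq_left h, max_eq_right (by linarith)]; ring

end HoffmanAux

open HoffmanAux in
/-- Hoffman error bound for the polyhedron `S = {x : Ax ≤ b, Cx = d}`:
`dist(x̄, S)² ≤ θ²(‖(Ax̄ - b)₊‖² + ‖Cx̄ - d‖²)` with `θ` depending only on `A` and `C`. -/
theorem stmt9 {m n k : ℕ} (A : Matrix (Fin m) (Fin n) ℝ) (C : Matrix (Fin k) (Fin n) ℝ) :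
    ∃ θ : ℝ, 0 < θ ∧
      ∀ (b : Fin m → ℝ) (d : Fin k → ℝ)
        (S : Set (EuclideanSpace ℝ (Fin n))),
        S = {x : EuclideanSpace ℝ (Fin n) | (∀ i, A.mulVec x i ≤ b i) ∧ (∀ j, C.mulVec x j = d j)} →
        S.Nonempty →
        ∀ xbar : EuclideanSpace ℝ (Fin n),
          (Metric.infDist xbar S) ^ 2 ≤
            θ ^ 2 * ((∑ i, max (A.mulVec xbar i - b i) 0 ^ 2)
              + ∑ j, (C.mulVec xbar j - d j) ^ 2) := by
  classical
  set a : (Fin m ⊕ (Fin k ⊕ Fin k)) → EuclideanSpace ℝ (Fin n) :=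
    Sum.elim (fun i => (WithLp.equiv 2 (Fin n → ℝ)).symm (A i))
      (Sum.elim (fun j => (WithLp.equiv 2 (Fin n → ℝ)).symm (C j))
        (fun j => (WithLp.equiv 2 (Fin n → ℝ)).symm (-(C j)))) with ha
  obtain ⟨θ, hθ, hcore⟩ := HoffmanAux.hoffman_core a
  refine ⟨θ, hθ, ?_⟩
  intro b d S hSdef hne xbar
  set b' : (Fin m ⊕ (Fin k ⊕ Fin k)) → ℝ :=
    Sum.elim b (Sum.elim d (fun j => -(d j))) with hb'
  have hA : ∀ (i : Fin m) (x : EuclideanSpace ℝ (Fin n)),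
      ⟪a (Sum.inl i), x⟫_ℝ = A.mulVec x i := by
    intro i x
    simp [ha, PiLp.inner_apply, RCLike.inner_apply, Matrix.mulVec, dotProduct, mul_comm]
  have hC : ∀ (j : Fin k) (x : EuclideanSpace ℝ (Fin n)),
      ⟪a (Sum.inr (Sum.inl j)), x⟫_ℝ = C.mulVec x j := by
    intro j x
    simp [ha, PiLp.inner_apply, RCLike.inner_apply, Matrix.mulVec, dotProduct, mul_comm]
  have hC' : ∀ (j : Fin k) (x : EuclideanSpace ℝ (Fin n)),
      ⟪a (Sum.inr (Sum.inr j)), x⟫_ℝ = -(C.mulVec x j) := by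
    intro j x
    simp [ha, PiLp.inner_apply, RCLike.inner_apply, Matrix.mulVec, dotProduct,
      Finset.sum_neg_distrib, mul_comm]
  have hSeq : S = {x : EuclideanSpace ℝ (Fin n) |
      ∀ s : Fin m ⊕ (Fin k ⊕ Fin k), ⟪a s, x⟫_ℝ ≤ b' s} := by
    rw [hSdef]
    ext x
    simp only [Set.mem_setOf_eq, Sum.forall]
    constructor
    · rintro ⟨h1, h2⟩
      refine ⟨fun i => ?_, fun j => ?_, fun j => ?_⟩
      · rw [hA]; exact h1 i
      · rw [hC]; exact (h2 j).le
      · rw [hC']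
        show -(C.mulVec x j) ≤ -(d j)
        rw [h2 j]
    · rintro ⟨h1, h2, h3⟩
      refine ⟨fun i => ?_, fun j => ?_⟩
      · have := h1 i; rwa [hA] at this
      · have hc1 := h2 j
        have hc2 := h3 j
        rw [hC] at hc1
        rw [hC'] at hc2
        have hc2' : d j ≤ C.mulVec x j := by
          have : -(C.mulVec x j) ≤ -(d j) := hc2
          linarith
        exact le_antisymm hc1 hc2'
  have hres : ∑ s : Fin m ⊕ (Fin k ⊕ Fin k), max (⟪a s, xbar⟫_ℝ - b' s) 0 ^ 2
      = (∑ i, max (A.mulVec xbar i - b i) 0 ^ 2) + ∑ j, (C.mulVec xbar j - d j) ^ 2 := by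
    rw [Fintype.sum_sum_type, Fintype.sum_sum_type]
    have hX : ∑ i, max (⟪a (Sum.inl i), xbar⟫_ℝ - b' (Sum.inl i)) 0 ^ 2
        = ∑ i, max (A.mulVec xbar i - b i) 0 ^ 2 :=
      Finset.sum_congr rfl fun i _ => by rw [hA]; simp [hb']
    have hYZ : True := trivial
    have e1 : ∀ j : Fin k, max (⟪a (Sum.inr (Sum.inl j)), xbar⟫_ℝ - b' (Sum.inr (Sum.inl j))) 0 ^ 2
        = max (C.mulVec xbar j - d j) 0 ^ 2 := fun j => by rw [hC]; simp [hb']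
    have e2 : ∀ j : Fin k, max (⟪a (Sum.inr (Sum.inr j)), xbar⟫_ℝ - b' (Sum.inr (Sum.inr j))) 0 ^ 2
        = max (-(C.mulVec xbar j - d j)) 0 ^ 2 := fun j => by
      rw [hC']
      simp only [hb', Sum.elim_inr, Sum.elim_inl]
      ring_nf
    have hZ : (∑ j, max (⟪a (Sum.inr (Sum.inl j)), xbar⟫_ℝ - b' (Sum.inr (Sum.inl j))) 0 ^ 2)
            + ∑ j, max (⟪a (Sum.inr (Sum.inr j)), xbar⟫_ℝ - b' (Sum.inr (Sum.inr j))) 0 ^ 2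
        = ∑ j, (C.mulVec xbar j - d j) ^ 2 :=
      calc (∑ j, max (⟪a (Sum.inr (Sum.inl j)), xbar⟫_ℝ - b' (Sum.inr (Sum.inl j))) 0 ^ 2)
            + ∑ j, max (⟪a (Sum.inr (Sum.inr j)), xbar⟫_ℝ - b' (Sum.inr (Sum.inr j))) 0 ^ 2
          = (∑ j, max (C.mulVec xbar j - d j) 0 ^ 2)
            + ∑ j, max (-(C.mulVec xbar j - d j)) 0 ^ 2 := by
            rw [Finset.sum_congr rfl fun j _ => e1 j, Finset.sum_congr rfl fun j _ => e2 j]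
        _ = ∑ j, (max (C.mulVec xbar j - d j) 0 ^ 2 + max (-(C.mulVec xbar j - d j)) 0 ^ 2) := by
            rw [Finset.sum_add_distrib]
        _ = ∑ j, (C.mulVec xbar j - d j) ^ 2 :=
            Finset.sum_congr rfl fun j _ => maxsq _
    rw [hX, hZ]
  have hne' : {x : EuclideanSpace ℝ (Fin n) |
      ∀ s : Fin m ⊕ (Fin k ⊕ Fin k), ⟪a s, x⟫_ℝ ≤ b' s}.Nonempty := hSeq ▸ hne
  have := hcore b' hne' xbar
  rw [hres] at this
  rw [hSeq]
  exact this
end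

section
/- Let g : ℝⁿ → ℝ be μ-strongly convex with L_g-Lipschitz gradient, C ⊆ ℝⁿ closed convex, x* = argmin_{x∈C} g(x), and c ∈ (0, 1/L_g]. Then the global error bound ‖x - Proj_C(x - c∇g(x))‖ ≥ cμ‖x - x*‖ holds for all x ∈ ℝⁿ. -/
open Set InnerProductSpace

variable {E : Type*} [NormedAddCommGroup E] [InnerProductSpace ℝ E] [CompleteSpace E]

lemma grad_inner_eq {f : E → ℝ} {G x : E} (hG : HasGradientAt f G x) (v : E) :
    ⟪G, v⟫_ℝ = fderiv ℝ f x v := by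
  have h1 : HasFDerivAt f (toDual ℝ E G) x := hG
  rw [h1.fderiv]; simp [toDual_apply_apply]

lemma dirDeriv {f : E → ℝ} {G : E → E} (hG : ∀ z, HasGradientAt f (G z) z)
    (x v : E) (t₀ : ℝ) :
    HasDerivAt (fun t : ℝ => f (x + t • v)) ⟪G (x + t₀ • v), v⟫_ℝ t₀ := by
  have hline : HasDerivAt (fun t : ℝ => x + t • v) v t₀ := by
    simpa using ((hasDerivAt_id t₀).smul_const v).const_add x
  have hF : HasFDerivAt f (toDual ℝ E (G (x + t₀ • v))) (x + t₀ • v) := hG _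
  have := hF.comp_hasDerivAt t₀ hline
  simpa [toDual_apply_apply, Function.comp_def] using this

lemma grad_ineq {f : E → ℝ} {G : E → E} (hG : ∀ z, HasGradientAt f (G z) z)
    (hconv : ConvexOn ℝ Set.univ f) (x y : E) :
    ⟪G x, y - x⟫_ℝ ≤ f y - f x := by
  set φ : ℝ → ℝ := fun t => f (x + t • (y - x)) with hφ
  have hφconv : ConvexOn ℝ Set.univ φ := by
    have := hconv.comp_affineMap (AffineMap.lineMap x y : ℝ →ᵃ[ℝ] E)
    simp only [Set.preimage_univ] at this
    convert this using 1
    any_goals rfl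
    funext t
    simp only [Function.comp_apply, AffineMap.lineMap_apply, φ]
    show f (x + t • (y - x)) = f (t • (y - x) + x)
    rw [add_comm]
  have hder : HasDerivAt φ ⟪G x, y - x⟫_ℝ 0 := by
    have := dirDeriv hG x (y - x) 0
    simpa using this
  have := hφconv.le_slope_of_hasDerivAt (Set.mem_univ (0:ℝ)) (Set.mem_univ (1:ℝ))
    one_pos hder
  rw [slope_def_field] at this
  simp only [φ] at this
  simpa using this

lemma descent {f : E → ℝ} {G : E → E} (hG : ∀ z, HasGradientAt f (G z) z)
    {K : ℝ} (hK : ∀ a b, ‖G a - G b‖ ≤ K * ‖a - b‖) (x y : E) :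
    f y ≤ f x + ⟪G x, y - x⟫_ℝ + K / 2 * ‖y - x‖ ^ 2 := by
  set v := y - x with hv
  set ψ : ℝ → ℝ := fun t => f (x + t • v) - t * ⟪G x, v⟫_ℝ - t ^ 2 * (K / 2 * ‖v‖ ^ 2)
    with hψ
  have hderiv : ∀ t : ℝ, HasDerivAt ψ
      (⟪G (x + t • v), v⟫_ℝ - ⟪G x, v⟫_ℝ - (2 * t) * (K / 2 * ‖v‖ ^ 2)) t := by
    intro t
    have h1 := dirDeriv hG x v t
    have h2 : HasDerivAt (fun t : ℝ => t * ⟪G x, v⟫_ℝ) ⟪G x, v⟫_ℝ t :=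
      hasDerivAt_mul_const _
    have h3 : HasDerivAt (fun t : ℝ => t ^ 2 * (K / 2 * ‖v‖ ^ 2))
        ((2 * t) * (K / 2 * ‖v‖ ^ 2)) t := by
      have := (hasDerivAt_pow 2 t).mul_const (K / 2 * ‖v‖ ^ 2)
      simpa using this
    exact (h1.sub h2).sub h3
  have hmono : AntitoneOn ψ (Set.Icc 0 1) := by
    apply antitoneOn_of_deriv_nonpos (convex_Icc 0 1)
    · exact fun t _ => ((hderiv t).continuousAt).continuousWithinAt
    · exact fun t _ => ((hderiv t).differentiableAt).differentiableWithinAt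
    · intro t ht
      rw [interior_Icc, Set.mem_Ioo] at ht
      rw [(hderiv t).deriv]
      have hb : ⟪G (x + t • v) - G x, v⟫_ℝ ≤ K * ‖t • v‖ * ‖v‖ := by
        calc ⟪G (x + t • v) - G x, v⟫_ℝ ≤ ‖G (x + t • v) - G x‖ * ‖v‖ :=
              real_inner_le_norm _ _
          _ ≤ (K * ‖(x + t • v) - x‖) * ‖v‖ :=
              mul_le_mul_of_nonneg_right (hK _ _) (norm_nonneg _)
          _ = K * ‖t • v‖ * ‖v‖ := by rw [add_sub_cancel_left]
    
      rw [inner_sub_left] at hb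
      rw [norm_smul] at hb
      rw [Real.norm_eq_abs, abs_of_pos ht.1] at hb
      nlinarith [hb]
  have h01 := hmono (Set.mem_Icc.2 ⟨le_refl 0, zero_le_one⟩)
      (Set.mem_Icc.2 ⟨zero_le_one, le_refl 1⟩) zero_le_one
  simp only [ψ] at h01
  simp only [zero_smul, add_zero, one_smul, zero_mul, sub_zero, one_pow, one_mul,
    zero_pow] at h01
  have : x + v = y := by rw [hv]; abel
  rw [this] at h01
  linarith [h01]

lemma coco_step {f : E → ℝ} {G : E → E} (hG : ∀ z, HasGradientAt f (G z) z)
    (hconv : ConvexOn ℝ Set.univ f) {Λ : ℝ}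
    (hdesc : ∀ a b : E, f b ≤ f a + ⟪G a, b - a⟫_ℝ + Λ / 2 * ‖b - a‖ ^ 2)
    (x y : E) (t : ℝ) :
    t * (1 - Λ * t / 2) * ‖G y - G x‖ ^ 2 ≤ f y - f x - ⟪G x, y - x⟫_ℝ := by
  set w := G y - G x with hw
  set z := y - t • w with hz
  have h1 : f z ≤ f y + ⟪G y, z - y⟫_ℝ + Λ / 2 * ‖z - y‖ ^ 2 := hdesc y z
  have h2 : ⟪G x, z - x⟫_ℝ ≤ f z - f x := grad_ineq hG hconv x z
  have hzy : z - y = -(t • w) := by rw [hz]; abel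
  have hzx : z - x = (y - x) - t • w := by rw [hz]; abel
  rw [hzy] at h1
  rw [hzx] at h2
  rw [inner_neg_right, real_inner_smul_right, norm_neg, norm_smul] at h1
  rw [inner_sub_right, real_inner_smul_right] at h2
  have hGyw : ⟪G y, w⟫_ℝ - ⟪G x, w⟫_ℝ = ‖w‖ ^ 2 := by
    rw [← inner_sub_left, hw, real_inner_self_eq_norm_sq]
  have habs : (‖t‖ * ‖w‖) ^ 2 = t ^ 2 * ‖w‖ ^ 2 := by
    rw [mul_pow, Real.norm_eq_abs, sq_abs]
  rw [habs] at h1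
  have h3 : t * ⟪G y, w⟫_ℝ - t * ⟪G x, w⟫_ℝ = t * ‖w‖ ^ 2 := by
    rw [← hGyw]; ring
  have hrw : t * (1 - Λ * t / 2) * ‖w‖ ^ 2 = t * ‖w‖ ^ 2 - Λ / 2 * (t ^ 2 * ‖w‖ ^ 2) := by
    ring
  rw [hrw]
  linarith [h1, h2, h3]

lemma coco {f : E → ℝ} {G : E → E} (hG : ∀ z, HasGradientAt f (G z) z)
    (hconv : ConvexOn ℝ Set.univ f) {Λ : ℝ} (hΛ : 0 ≤ Λ)
    (hdesc : ∀ a b : E, f b ≤ f a + ⟪G a, b - a⟫_ℝ + Λ / 2 * ‖b - a‖ ^ 2)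
    (x y : E) :
    ‖G x - G y‖ ^ 2 ≤ Λ * ⟪G x - G y, x - y⟫_ℝ := by
  have key : ∀ t : ℝ, t * (2 - Λ * t) * ‖G x - G y‖ ^ 2 ≤ ⟪G x - G y, x - y⟫_ℝ := by
    intro t
    have h1 := coco_step hG hconv hdesc x y t
    have h2 := coco_step hG hconv hdesc y x t
    have hnorm : ‖G x - G y‖ = ‖G y - G x‖ := norm_sub_rev _ _
    have hsum : ⟪G x, x - y⟫_ℝ - ⟪G y, x - y⟫_ℝ = ⟪G x - G y, x - y⟫_ℝ := by
      rw [inner_sub_left]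
    have e1 : ⟪G x, y - x⟫_ℝ = -⟪G x, x - y⟫_ℝ := by
      rw [← inner_neg_right]; congr 1; abel
    have e2 : ⟪G y, x - y⟫_ℝ = ⟪G y, x - y⟫_ℝ := rfl
    rw [hnorm]
    rw [hnorm] at h2
    have hh : t * (2 - Λ * t) * ‖G y - G x‖ ^ 2
        = t * (1 - Λ * t / 2) * ‖G y - G x‖ ^ 2 + t * (1 - Λ * t / 2) * ‖G y - G x‖ ^ 2 := by
      ring
    rw [hh]
    linarith [h1, h2, hsum, e1]
  rcases eq_or_lt_of_le hΛ with hΛ0 | hΛpos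
  · subst hΛ0
    have hw0 : ‖G x - G y‖ ^ 2 ≤ 0 := by
      by_contra hne
      push_neg at hne
      have hkey := key ((⟪G x - G y, x - y⟫_ℝ + 1) / (2 * ‖G x - G y‖ ^ 2))
      have harith : (⟪G x - G y, x - y⟫_ℝ + 1) / (2 * ‖G x - G y‖ ^ 2) *
          (2 - 0 * ((⟪G x - G y, x - y⟫_ℝ + 1) / (2 * ‖G x - G y‖ ^ 2))) *
          ‖G x - G y‖ ^ 2 = ⟪G x - G y, x - y⟫_ℝ + 1 := by
        have hn : ‖G x - G y‖ ≠ 0 := fun h => by simp [h] at hne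
        field_simp
        ring
      rw [harith] at hkey
      linarith
    rw [zero_mul]
    exact hw0
  · have := key (1 / Λ)
    have harith : (1 / Λ) * (2 - Λ * (1 / Λ)) = 1 / Λ := by
      field_simp; norm_num
    rw [harith] at this
    rw [div_mul_eq_mul_div, one_mul, div_le_iff₀ hΛpos] at this
    linarith [this]

lemma proj_vi {C : Set E} (hCcvx : Convex ℝ C) {proj : E → E}
    (hproj : ∀ v, proj v ∈ C ∧ ∀ w ∈ C, ‖v - proj v‖ ≤ ‖v - w‖)
    (v w : E) (hw : w ∈ C) : ⟪v - proj v, w - proj v⟫_ℝ ≤ 0 := by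
  set p := proj v with hp
  have hpC : p ∈ C := (hproj v).1
  set I := ⟪v - p, w - p⟫_ℝ with hI
  have hstep : ∀ t : ℝ, 0 < t → t ≤ 1 → I ≤ t * (‖w - p‖ ^ 2 / 2) := by
    intro t ht0 ht1
    have hz : p + t • (w - p) ∈ C := by
      have := hCcvx hpC hw (by linarith : (0:ℝ) ≤ 1 - t) (le_of_lt ht0) (by ring)
      have heq : (1 - t) • p + t • w = p + t • (w - p) := by module
      rwa [heq] at this
    have hd := (hproj v).2 _ hz
    have hsq : ‖v - p‖ ^ 2 ≤ ‖v - (p + t • (w - p))‖ ^ 2 := by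
      apply pow_le_pow_left₀ (norm_nonneg _) hd
    have hexp : v - (p + t • (w - p)) = (v - p) - t • (w - p) := by abel
    rw [hexp, norm_sub_sq_real (v - p) (t • (w - p)), real_inner_smul_right, norm_smul,
      Real.norm_eq_abs, abs_of_pos ht0, mul_pow] at hsq
    nlinarith [hsq, ht0]
  by_contra hcon
  push_neg at hcon
  set N := ‖w - p‖ ^ 2 / 2 with hN
  have hN0 : 0 ≤ N := by positivity
  have hI0 : 0 < I := hcon
  set t := min 1 (I / (N + 1)) with ht
  have ht0 : 0 < t := lt_min one_pos (div_pos hI0 (by linarith))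
  have ht1 : t ≤ 1 := min_le_left _ _
  have hkey := hstep t ht0 ht1
  have ht2 : t ≤ I / (N + 1) := min_le_right _ _
  have h1 : t * N ≤ (I / (N + 1)) * N := mul_le_mul_of_nonneg_right ht2 hN0
  have h2 : (I / (N + 1)) * N < I := by
    rw [div_mul_eq_mul_div, div_lt_iff₀ (by linarith : (0:ℝ) < N + 1)]
    nlinarith
  linarith

lemma opt_vi {g : E → ℝ} {G : E → E} (hG : ∀ z, HasGradientAt g (G z) z)
    (hconv : ConvexOn ℝ Set.univ g) {Lg : ℝ} (hLg : ∀ a b, ‖G a - G b‖ ≤ Lg * ‖a - b‖)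
    (hLgpos : 0 < Lg) {C : Set E} (hCcvx : Convex ℝ C) {q : E} (hq : q ∈ C)
    (hmin : IsMinOn g C q) (w : E) (hw : w ∈ C) : 0 ≤ ⟪G q, w - q⟫_ℝ := by
  have hstep : ∀ t : ℝ, 0 < t → t ≤ 1 → -(Lg * t * ‖w - q‖ ^ 2) ≤ ⟪G q, w - q⟫_ℝ := by
    intro t ht0 ht1
    set z := q + t • (w - q) with hzdef
    have hz : z ∈ C := by
      have := hCcvx hq hw (by linarith : (0:ℝ) ≤ 1 - t) (le_of_lt ht0) (by ring)
      have heq : (1 - t) • q + t • w = q + t • (w - q) := by module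
      rwa [heq] at this
    have h1 : ⟪G z, q - z⟫_ℝ ≤ g q - g z := grad_ineq hG hconv z q
    have h2 : g q ≤ g z := hmin hz
    have hqz : q - z = -(t • (w - q)) := by rw [hzdef]; abel
    rw [hqz, inner_neg_right, real_inner_smul_right] at h1
    have h3 : 0 ≤ ⟪G z, w - q⟫_ℝ := by nlinarith [h1, h2, ht0]
    have h4 : ⟪G q, w - q⟫_ℝ = ⟪G z, w - q⟫_ℝ - ⟪G z - G q, w - q⟫_ℝ := by
      rw [inner_sub_left]; ring
    have h5 : ⟪G z - G q, w - q⟫_ℝ ≤ Lg * t * ‖w - q‖ ^ 2 := by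
      calc ⟪G z - G q, w - q⟫_ℝ ≤ ‖G z - G q‖ * ‖w - q‖ := real_inner_le_norm _ _
        _ ≤ (Lg * ‖z - q‖) * ‖w - q‖ := mul_le_mul_of_nonneg_right (hLg _ _) (norm_nonneg _)
        _ = Lg * t * ‖w - q‖ ^ 2 := by
            have : z - q = t • (w - q) := by rw [hzdef]; abel
            rw [this, norm_smul, Real.norm_eq_abs, abs_of_pos ht0]; ring
    linarith [h3, h4.le, h4.ge, h5]
  by_contra hcon
  push_neg at hcon
  set I := -⟪G q, w - q⟫_ℝ with hI
  have hI0 : 0 < I := by simp [hI]; linarith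
  set N := Lg * ‖w - q‖ ^ 2 with hN
  have hN0 : 0 ≤ N := by positivity
  set t := min 1 (I / (N + 1)) with ht
  have ht0 : 0 < t := lt_min one_pos (div_pos hI0 (by linarith))
  have ht1 : t ≤ 1 := min_le_left _ _
  have hkey := hstep t ht0 ht1
  have ht2 : t ≤ I / (N + 1) := min_le_right _ _
  have h1 : t * N ≤ (I / (N + 1)) * N := mul_le_mul_of_nonneg_right ht2 hN0
  have h2 : (I / (N + 1)) * N < I := by
    rw [div_mul_eq_mul_div, div_lt_iff₀ (by linarith : (0:ℝ) < N + 1)]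
    nlinarith
  have : -(Lg * t * ‖w - q‖ ^ 2) = -(t * N) := by rw [hN]; ring
  rw [this] at hkey
  linarith

lemma hasGradient_sub_sq {g : E → ℝ} (hg : Differentiable ℝ g) (μ : ℝ) (z : E) :
    HasGradientAt (fun w => g w - μ / 2 * ‖w‖ ^ 2) (gradient g z - μ • z) z := by
  rw [hasGradientAt_iff_hasFDerivAt]
  have hg1 : HasFDerivAt g (fderiv ℝ g z) z := (hg z).hasFDerivAt
  have hinner : HasFDerivAt (fun w : E => ⟪w, w⟫_ℝ)
      ((fderivInnerCLM ℝ (z, z)).comp ((ContinuousLinearMap.id ℝ E).prod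
        (ContinuousLinearMap.id ℝ E))) z :=
    (hasFDerivAt_id z).inner ℝ (hasFDerivAt_id z)
  have hnormsq : HasFDerivAt (fun w : E => ‖w‖ ^ 2)
      ((fderivInnerCLM ℝ (z, z)).comp ((ContinuousLinearMap.id ℝ E).prod
        (ContinuousLinearMap.id ℝ E))) z := by
    have : (fun w : E => ‖w‖ ^ 2) = (fun w : E => ⟪w, w⟫_ℝ) := by
      funext w; exact (real_inner_self_eq_norm_sq w).symm
    rw [this]; exact hinner
  have hcomb := hg1.sub ((hnormsq.const_mul (μ / 2)))
  have heq : (fderiv ℝ g z) - (μ / 2) • ((fderivInnerCLM ℝ (z, z)).comp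
      ((ContinuousLinearMap.id ℝ E).prod (ContinuousLinearMap.id ℝ E)))
      = toDual ℝ E (gradient g z - μ • z) := by
    apply ContinuousLinearMap.ext
    intro v
    have hgr : ⟪gradient g z, v⟫_ℝ = fderiv ℝ g z v :=
      grad_inner_eq (hg z).hasGradientAt v
    simp only [ContinuousLinearMap.coe_sub', Pi.sub_apply, ContinuousLinearMap.coe_smul',
      Pi.smul_apply, ContinuousLinearMap.coe_comp', Function.comp_apply,
      ContinuousLinearMap.prod_apply, ContinuousLinearMap.coe_id', id_eq,
      fderivInnerCLM_apply, toDual_apply_apply, smul_eq_mul]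
    rw [inner_sub_left, real_inner_smul_left, ← hgr]
    rw [real_inner_comm v z]
    ring
  rw [← heq]
  exact hcomb

set_option maxHeartbeats 2000000 in
/-- Global error bound for the gradient projection residual of a strongly convex problem:
`‖x - Proj_C(x - c∇g(x))‖ ≥ cμ‖x - x*‖` for all `x`. -/
theorem stmt10 {n : ℕ} (g : EuclideanSpace ℝ (Fin n) → ℝ)
    (C : Set (EuclideanSpace ℝ (Fin n))) (μ Lg c : ℝ)
    (proj : EuclideanSpace ℝ (Fin n) → EuclideanSpace ℝ (Fin n))
    (xstar : EuclideanSpace ℝ (Fin n))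
    (hg : Differentiable ℝ g)
    (hLg : ∀ x x', ‖gradient g x - gradient g x'‖ ≤ Lg * ‖x - x'‖)
    (hμ : 0 < μ) (hsc : StrongConvexOn Set.univ μ g)
    (hCne : C.Nonempty) (hCcl : IsClosed C) (hCcvx : Convex ℝ C)
    (hproj : ∀ v, proj v ∈ C ∧ ∀ w ∈ C, ‖v - proj v‖ ≤ ‖v - w‖)
    (hxs : xstar ∈ C ∧ IsMinOn g C xstar)
    (hc : 0 < c) (hcL : c ≤ 1 / Lg) :
    ∀ x, c * μ * ‖x - xstar‖ ≤ ‖x - proj (x - c • gradient g x)‖ := by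
  obtain ⟨hqC, hqmin⟩ := hxs
  have hLgpos : 0 < Lg := by
    by_contra hns
    push_neg at hns
    rcases lt_or_eq_of_le hns with h | h
    · have : (1:ℝ)/Lg < 0 := div_neg_of_pos_of_neg one_pos h
      linarith
    · rw [h] at hcL
      norm_num at hcL
      linarith
  have hcLg1 : c * Lg ≤ 1 := (le_div_iff₀ hLgpos).mp hcL
  have hGg : ∀ z, HasGradientAt g (gradient g z) z := fun z => (hg z).hasGradientAt
  have hconvg : ConvexOn ℝ Set.univ g :=
    hsc.convexOn (fun r => by dsimp; nlinarith [sq_nonneg r, hμ.le])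
  intro x
  by_cases hxq : x = xstar
  · subst hxq
    simp only [sub_self, norm_zero, mul_zero]
    exact norm_nonneg _
  have hD : 0 < ‖x - xstar‖ := by
    rw [norm_pos_iff, sub_ne_zero]; exact hxq
  set d := x - xstar with hd
  set e := gradient g x - gradient g xstar with he
  set p := proj (x - c • gradient g x) with hp
  have hpC : p ∈ C := (hproj _).1
  clear_value d e p
  -- convexity of h
  have hconvh : ConvexOn ℝ Set.univ (fun z => g z - μ / 2 * ‖z‖ ^ 2) :=
    strongConvexOn_iff_convex.mp hsc
  have hGh : ∀ z, HasGradientAt (fun w => g w - μ / 2 * ‖w‖ ^ 2) (gradient g z - μ • z) z :=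
    hasGradient_sub_sq hg μ
  -- strong monotonicity
  have hsubeq : (gradient g x - μ • x) - (gradient g xstar - μ • xstar) = e - μ • d := by
    rw [he, hd]; module
  have hB0 : 0 ≤ ⟪e - μ • d, d⟫_ℝ := by
    have h1 := grad_ineq hGh hconvh x xstar
    have h2 := grad_ineq hGh hconvh xstar x
    have e1 : xstar - x = -d := by rw [hd]; abel
    have e2 : x - xstar = d := by rw [hd]
    rw [e1, inner_neg_right] at h1
    rw [e2] at h2
    have hsum : ⟪gradient g xstar - μ • xstar, d⟫_ℝ - ⟪gradient g x - μ • x, d⟫_ℝ ≤ 0 := by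
      linarith
    have : ⟪e - μ • d, d⟫_ℝ
        = ⟪gradient g x - μ • x, d⟫_ℝ - ⟪gradient g xstar - μ • xstar, d⟫_ℝ := by
      rw [← hsubeq, inner_sub_left]
    linarith [this.ge, this.le]
  have hmono : μ * ‖d‖ ^ 2 ≤ ⟪e, d⟫_ℝ := by
    have : ⟪e - μ • d, d⟫_ℝ = ⟪e, d⟫_ℝ - μ * ‖d‖ ^ 2 := by
      rw [inner_sub_left, real_inner_smul_left, real_inner_self_eq_norm_sq]
    linarith [hB0, this.le, this.ge]
  -- μ ≤ Lg
  have hE : ‖e‖ ≤ Lg * ‖d‖ := by rw [he, hd]; exact hLg x xstar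
  have hED : ⟪e, d⟫_ℝ ≤ Lg * ‖d‖ ^ 2 := by
    calc ⟪e, d⟫_ℝ ≤ ‖e‖ * ‖d‖ := real_inner_le_norm _ _
      _ ≤ (Lg * ‖d‖) * ‖d‖ := mul_le_mul_of_nonneg_right hE (norm_nonneg _)
      _ = Lg * ‖d‖ ^ 2 := by ring
  have hμLg : μ ≤ Lg := by nlinarith [hmono, hED, pow_pos hD 2]
  -- descent lemma for h
  have hdesch : ∀ a b : EuclideanSpace ℝ (Fin n),
      (fun z => g z - μ / 2 * ‖z‖ ^ 2) b ≤ (fun z => g z - μ / 2 * ‖z‖ ^ 2) a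
        + ⟪gradient g a - μ • a, b - a⟫_ℝ + (Lg - μ) / 2 * ‖b - a‖ ^ 2 := by
    intro a b
    have hdg := descent hGg hLg a b
    have hnorm : ‖b‖ ^ 2 = ‖a‖ ^ 2 + 2 * ⟪a, b - a⟫_ℝ + ‖b - a‖ ^ 2 := by
      have hb : b = a + (b - a) := by abel
      nth_rewrite 1 [hb]
      rw [norm_add_sq_real]
    have hip : ⟪gradient g a - μ • a, b - a⟫_ℝ
        = ⟪gradient g a, b - a⟫_ℝ - μ * ⟪a, b - a⟫_ℝ := by
      rw [inner_sub_left, real_inner_smul_left]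
    have hnorm2 : μ / 2 * ‖b‖ ^ 2
        = μ / 2 * ‖a‖ ^ 2 + μ * ⟪a, b - a⟫_ℝ + μ / 2 * ‖b - a‖ ^ 2 := by
      rw [hnorm]; ring
    dsimp only
    rw [hip]
    linarith [hdg, hnorm2]
  -- co-coercivity of h
  have hcoco := coco hGh hconvh (by linarith : (0:ℝ) ≤ Lg - μ) hdesch x xstar
  rw [hsubeq] at hcoco
  have hxq' : x - xstar = d := by rw [hd]
  rw [hxq'] at hcoco
  -- key contraction bound
  have hcμ : c * μ ≤ 1 := le_trans (by nlinarith [hc.le, hμLg]) hcLg1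
  have hkey : ‖d - c • e‖ ^ 2 ≤ ((1 - c * μ) * ‖d‖) ^ 2 := by
    have hexp : d - c • e = (1 - c * μ) • d - c • (e - μ • d) := by module
    rw [hexp, norm_sub_sq_real ((1 - c * μ) • d) (c • (e - μ • d)),
      real_inner_smul_left, real_inner_smul_right, norm_smul, norm_smul,
      Real.norm_eq_abs, Real.norm_eq_abs, abs_of_nonneg (by linarith : (0:ℝ) ≤ 1 - c * μ),
      abs_of_pos hc]
    have hBc : ⟪d, e - μ • d⟫_ℝ = ⟪e - μ • d, d⟫_ℝ := real_inner_comm _ _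
    rw [hBc, mul_pow, mul_pow]
    have step1 : c ^ 2 * ‖e - μ • d‖ ^ 2 ≤ c ^ 2 * ((Lg - μ) * ⟪e - μ • d, d⟫_ℝ) :=
      mul_le_mul_of_nonneg_left hcoco (sq_nonneg c)
    have step2 : c ^ 2 * ((Lg - μ) * ⟪e - μ • d, d⟫_ℝ)
        ≤ 2 * ((1 - c * μ) * (c * ⟪e - μ • d, d⟫_ℝ)) := by
      nlinarith [mul_nonneg hc.le hB0, hcLg1, hcμ]
    nlinarith [step1, step2]
  have hdce : ‖d - c • e‖ ≤ (1 - c * μ) * ‖d‖ := by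
    have h1 : (0:ℝ) ≤ (1 - c * μ) * ‖d‖ :=
      mul_nonneg (by linarith) (norm_nonneg _)
    exact (pow_le_pow_iff_left₀ (norm_nonneg _) h1 two_ne_zero).mp hkey
  -- ‖p - xstar‖ ≤ ‖d - c e‖
  have hVI := proj_vi hCcvx hproj (x - c • gradient g x) xstar hqC
  rw [← hp] at hVI
  have hopt := opt_vi hGg hconvg hLg hLgpos hCcvx hqC hqmin p hpC
  have hPsq : ‖p - xstar‖ ^ 2 ≤ ⟪d - c • e, p - xstar⟫_ℝ := by
    have hveq : (d - c • e) - (p - xstar)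
        = ((x - c • gradient g x) - p) + c • gradient g xstar := by
      rw [hd, he]; module
    have hsplit : ⟪(d - c • e) - (p - xstar), p - xstar⟫_ℝ
        = ⟪(x - c • gradient g x) - p, p - xstar⟫_ℝ
          + c * ⟪gradient g xstar, p - xstar⟫_ℝ := by
      rw [hveq, inner_add_left, real_inner_smul_left]
    have hflip : ⟪(x - c • gradient g x) - p, p - xstar⟫_ℝ
        = -⟪(x - c • gradient g x) - p, xstar - p⟫_ℝ := by
      rw [← inner_neg_right]; congr 1; abel
    have hgoal0 : 0 ≤ ⟪(d - c • e) - (p - xstar), p - xstar⟫_ℝ := by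
      rw [hsplit, hflip]
      nlinarith [hVI, hopt, hc.le, mul_nonneg hc.le hopt]
    have hdecomp : ⟪(d - c • e) - (p - xstar), p - xstar⟫_ℝ
        = ⟪d - c • e, p - xstar⟫_ℝ - ‖p - xstar‖ ^ 2 := by
      rw [inner_sub_left, real_inner_self_eq_norm_sq]
    linarith [hgoal0, hdecomp.le, hdecomp.ge]
  have hP : ‖p - xstar‖ ≤ (1 - c * μ) * ‖d‖ := by
    have hCS : ⟪d - c • e, p - xstar⟫_ℝ ≤ ‖d - c • e‖ * ‖p - xstar‖ :=
      real_inner_le_norm _ _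
    rcases eq_or_lt_of_le (norm_nonneg (p - xstar)) with hP0 | hP0
    · rw [← hP0]
      exact mul_nonneg (by linarith) (norm_nonneg _)
    · have h1 : ‖p - xstar‖ ^ 2 ≤ ‖d - c • e‖ * ‖p - xstar‖ := le_trans hPsq hCS
      have h2 : ‖p - xstar‖ ≤ ‖d - c • e‖ := by
        nlinarith [h1, hP0]
      linarith [h2, hdce]
  have htri : ‖d‖ ≤ ‖x - p‖ + ‖p - xstar‖ := by
    have hsum : d = (x - p) + (p - xstar) := by rw [hd]; abel
    rw [hsum]
    exact norm_add_le _ _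
  linarith [htri, hP]
end

section
/- Let P = ∏ᵢ[ℓᵢ, uᵢ] be a bounded box, f differentiable on ℝⁿ, K(x, z; y) = f(x) + ⟨y, Ax-b⟩ + (Γ/2)‖Ax-b‖² + (p/2)‖x-z‖². Suppose x, y, z satisfy y = y + α(Ax - b), x = [x - c∇ₓK(x, z; y)]₊ (projection onto P), and z = z + β(x - z) with α, c, β > 0. Then Ax = b, x = z, and x together with the multiplier y satisfies the KKT conditions for minimizing f over {x ∈ P : Ax = b}; in particular x is a stationary point. -/
open scoped RealInnerProductSpace

/-- Fixed points of the proximal inexact augmented Lagrangian iteration are KKT points: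
if `y = y + α(Ax - b)`, `x = [x - c∇ₓK(x, z; y)]₊` and `z = z + β(x - z)`, then `Ax = b`,
`x = z`, and `x`, `y` satisfy the KKT conditions of `min f over {x ∈ P : Ax = b}`. -/
theorem stmt12 {n m : ℕ} (f : EuclideanSpace ℝ (Fin n) → ℝ)
    (A : EuclideanSpace ℝ (Fin n) →L[ℝ] EuclideanSpace ℝ (Fin m))
    (b : EuclideanSpace ℝ (Fin m)) (ℓ u : Fin n → ℝ)
    (α β c Γ p : ℝ)
    (K : EuclideanSpace ℝ (Fin n) → ℝ)
    (x z : EuclideanSpace ℝ (Fin n)) (y : EuclideanSpace ℝ (Fin m))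
    (gK gf : EuclideanSpace ℝ (Fin n))
    (hlu : ∀ i, ℓ i < u i)
    (hα : 0 < α) (hβ : 0 < β) (hc : 0 < c) (hΓ : 0 < Γ) (hp : 0 < p)
    (hf : Differentiable ℝ f)
    (hK : ∀ w, K w = f w + (inner ℝ y (A w - b) : ℝ)
      + Γ / 2 * ‖A w - b‖ ^ 2 + p / 2 * ‖w - z‖ ^ 2)
    (hgK : HasGradientAt K gK x)
    (hgf : HasGradientAt f gf x)
    (hyfix : y = y + α • (A x - b))
    (hxfix : ∀ i, x i = max (ℓ i) (min (u i) ((x - c • gK) i)))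
    (hzfix : z = z + β • (x - z)) :
    A x = b ∧ x = z ∧ (∀ i, x i ∈ Set.Icc (ℓ i) (u i)) ∧
      ∃ μ ν : EuclideanSpace ℝ (Fin n),
        (∀ i, 0 ≤ μ i) ∧ (∀ i, 0 ≤ ν i) ∧
        gf + (ContinuousLinearMap.adjoint A) y - μ + ν = 0 ∧
        (∀ i, μ i * (x i - ℓ i) = 0) ∧
        (∀ i, ν i * (u i - x i) = 0) := by
  -- Step 1: A x = b
  have hAxb : A x - b = 0 := by
    have h0 : α • (A x - b) = 0 := (left_eq_add.mp hyfix)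
    rcases smul_eq_zero.mp h0 with h | h
    · exact absurd h hα.ne'
    · exact h
  have hAx : A x = b := sub_eq_zero.mp hAxb
  -- Step 2: x = z
  have hxz0 : x - z = 0 := by
    have h0 : β • (x - z) = 0 := (left_eq_add.mp hzfix)
    rcases smul_eq_zero.mp h0 with h | h
    · exact absurd h hβ.ne'
    · exact h
  have hxz : x = z := sub_eq_zero.mp hxz0
  -- Step 3: gradient of K at x is gf + A† y
  have hA' : HasFDerivAt (fun w => A w - b) (A : EuclideanSpace ℝ (Fin n) →L[ℝ] _) x :=
    A.hasFDerivAt.sub_const b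
  have hid : HasFDerivAt (fun w : EuclideanSpace ℝ (Fin n) => w - z)
      (ContinuousLinearMap.id ℝ _) x := (hasFDerivAt_id x).sub_const z
  have h2 := (hasFDerivAt_const y x).inner ℝ hA'
  have h3 := hA'.inner ℝ hA'
  have h4 := hid.inner ℝ hid
  have hKd : HasFDerivAt K
      ((InnerProductSpace.toDual ℝ _ gf
        + (fderivInnerCLM ℝ ((fun _ => y) x, A x - b)).comp
            ((0 : EuclideanSpace ℝ (Fin n) →L[ℝ] EuclideanSpace ℝ (Fin m)).prod A)
        + (Γ / 2) • ((fderivInnerCLM ℝ (A x - b, A x - b)).comp (A.prod A)))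
        + (p / 2) • ((fderivInnerCLM ℝ (x - z, x - z)).comp
            ((ContinuousLinearMap.id ℝ _).prod (ContinuousLinearMap.id ℝ _)))) x := by
    have hKf : K = fun w => f w + (⟪y, A w - b⟫ : ℝ)
        + Γ / 2 * ⟪A w - b, A w - b⟫ + p / 2 * ⟪w - z, w - z⟫ := by
      funext w
      rw [hK w, real_inner_self_eq_norm_sq, real_inner_self_eq_norm_sq]
    rw [hKf]
    exact ((hgf.hasFDerivAt.add h2).add (h3.const_mul _)).add (h4.const_mul _)
  have hGrad : HasGradientAt K (gf + (ContinuousLinearMap.adjoint A) y) x := by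
    rw [hasGradientAt_iff_hasFDerivAt]
    refine hKd.congr_fderiv ?_
    ext w
    simp [InnerProductSpace.toDual_apply_apply, ContinuousLinearMap.prod_apply,
      fderivInnerCLM_apply, hAxb, hxz0, inner_add_left,
      ContinuousLinearMap.adjoint_inner_left]
  have hgKeq : gK = gf + (ContinuousLinearMap.adjoint A) y := hgK.unique hGrad
  -- coordinates of the fixed point equation
  have hfix : ∀ i, x i = max (ℓ i) (min (u i) (x i - c * gK i)) := by
    intro i
    have := hxfix i
    simpa [PiLp.sub_apply, PiLp.smul_apply, smul_eq_mul] using this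
  -- membership
  have hmem : ∀ i, x i ∈ Set.Icc (ℓ i) (u i) := by
    intro i
    constructor
    · rw [hfix i]; exact le_max_left _ _
    · rw [hfix i]; exact max_le (hlu i).le (min_le_left _ _)
  -- sign facts
  have hpos : ∀ i, 0 < gK i → x i = ℓ i := by
    intro i hi
    have ht : x i - c * gK i < x i := by nlinarith
    have hm : min (u i) (x i - c * gK i) < x i :=
      lt_of_le_of_lt (min_le_right _ _) ht
    rcases max_choice (ℓ i) (min (u i) (x i - c * gK i)) with h | h
    · rw [hfix i, h]
    · exfalso
      have hx : x i = min (u i) (x i - c * gK i) := (hfix i).trans h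
      linarith [hm, hx]
  have hneg : ∀ i, gK i < 0 → x i = u i := by
    intro i hi
    have ht : x i < x i - c * gK i := by nlinarith
    rcases min_choice (u i) (x i - c * gK i) with h | h
    · rw [hfix i, h]; exact max_eq_right (hlu i).le
    · exfalso
      have : x i ≥ x i - c * gK i := by
        calc x i = max (ℓ i) (min (u i) (x i - c * gK i)) := hfix i
          _ ≥ min (u i) (x i - c * gK i) := le_max_right _ _
          _ = x i - c * gK i := h
      linarith
  refine ⟨hAx, hxz, hmem,
    (WithLp.equiv 2 _).symm (fun i => max (gK i) 0),
    (WithLp.equiv 2 _).symm (fun i => max (-gK i) 0), ?_, ?_, ?_, ?_, ?_⟩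
  · intro i; simp [WithLp.equiv_symm_apply, PiLp.toLp_apply]
  · intro i; simp [WithLp.equiv_symm_apply, PiLp.toLp_apply]
  · rw [← hgKeq]
    ext i
    simp only [PiLp.add_apply, PiLp.sub_apply, WithLp.equiv_symm_apply, PiLp.toLp_apply, PiLp.zero_apply]
    rcases le_total (gK i) 0 with h | h
    · rw [max_eq_right h, max_eq_left (by linarith)]; ring
    · rw [max_eq_left h, max_eq_right (by linarith)]; ring
  · intro i
    simp only [WithLp.equiv_symm_apply, PiLp.toLp_apply]
    rcases le_or_gt (gK i) 0 with h | h
    · rw [max_eq_right h]; ring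
    · rw [hpos i h]; ring
  · intro i
    simp only [WithLp.equiv_symm_apply, PiLp.toLp_apply]
    rcases le_or_gt 0 (gK i) with h | h
    · rw [max_eq_right (by linarith)]; ring
    · rw [hneg i h]; ring
end

section
/- Suppose 0 lies in the relative interior of AP - b = {Ax - b : x ∈ P} for a compact box P. Let K(x, z; y) be the proximal augmented Lagrangian (strongly convex in x) with minimizer x(y, z) over P. If {yⁱ} ⊆ ỹ⁰ + range(A) for a fixed ỹ⁰ and {zⁱ} ⊆ P are sequences such that ‖A x(yⁱ, zⁱ) - b‖ → 0, then the sequence {yⁱ} is bounded. -/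
private lemma stmt13_compact {n : ℕ} (ℓ u : Fin n → ℝ) (P : Set (EuclideanSpace ℝ (Fin n)))
    (hP : P = {x | ∀ i, x i ∈ Set.Icc (ℓ i) (u i)}) : IsCompact P := by
  have : P = (EuclideanSpace.equiv (Fin n) ℝ).symm ''
      (Set.univ.pi fun i => Set.Icc (ℓ i) (u i)) := by
    rw [hP]; ext x
    constructor
    · intro h
      exact ⟨EuclideanSpace.equiv (Fin n) ℝ x, fun i _ => h i, by simp⟩
    · rintro ⟨v, hv, rfl⟩ i
      exact hv i (Set.mem_univ i)
  rw [this]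
  exact ((isCompact_univ_pi fun i => isCompact_Icc).image
    (EuclideanSpace.equiv (Fin n) ℝ).symm.continuous)

private lemma stmt13_span {n m : ℕ} (A : EuclideanSpace ℝ (Fin n) →L[ℝ] EuclideanSpace ℝ (Fin m))
    (b : EuclideanSpace ℝ (Fin m)) (ℓ u : Fin n → ℝ)
    (P : Set (EuclideanSpace ℝ (Fin n)))
    (hP : P = {x | ∀ i, x i ∈ Set.Icc (ℓ i) (u i)})
    (hlu : ∀ i, ℓ i < u i) (w : EuclideanSpace ℝ (Fin n)) :
    A w ∈ vectorSpan ℝ ((fun x => A x - b) '' P) := by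
  set S := (fun x => A x - b) '' P with hS
  set x₀ : EuclideanSpace ℝ (Fin n) := WithLp.toLp 2 (fun i => (ℓ i + u i) / 2) with hx₀
  have hx₀P : x₀ ∈ P := by
    rw [hP]; intro i
    have := hlu i
    constructor <;> simp [hx₀] <;> linarith
  have hsingle : ∀ i : Fin n, A (EuclideanSpace.single i 1) ∈ vectorSpan ℝ S := by
    intro i
    set c : ℝ := (u i - ℓ i) / 2 with hc
    have hcpos : 0 < c := by have := hlu i; simp [hc]; linarith
    have hx₁P : x₀ + c • EuclideanSpace.single i 1 ∈ P := by
      rw [hP]; intro j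
      have hlj := hlu j
      have : (x₀ + c • EuclideanSpace.single i (1:ℝ)) j
          = (ℓ j + u j)/2 + c * (if j = i then 1 else 0) := by
        simp [hx₀, EuclideanSpace.single_apply]
      rw [this]
      rcases eq_or_ne j i with rfl | hne
      · simp [hc]; constructor <;> linarith
      · simp [hne]; constructor <;> linarith
    have hmem : (A (x₀ + c • EuclideanSpace.single i 1) - b) -ᵥ (A x₀ - b) ∈ vectorSpan ℝ S :=
      vsub_mem_vectorSpan ℝ (Set.mem_image_of_mem _ hx₁P) (Set.mem_image_of_mem _ hx₀P)
    have heq : (A (x₀ + c • EuclideanSpace.single i 1) - b) -ᵥ (A x₀ - b)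
        = c • A (EuclideanSpace.single i 1) := by
      simp only [vsub_eq_sub, map_add, map_smul]; abel
    rw [heq] at hmem
    exact (Submodule.smul_mem_iff _ (ne_of_gt hcpos)).1 hmem
  have hw : w = ∑ i, w i • EuclideanSpace.single i (1:ℝ) := by
    ext j
    rw [WithLp.ofLp_sum, Fintype.sum_apply]
    simp [EuclideanSpace.single_apply, PiLp.smul_apply, Finset.sum_ite_eq']
  have : A w = ∑ i, w i • A (EuclideanSpace.single i 1) := by
    conv_lhs => rw [hw]
    simp [map_sum, map_smul]
  rw [this]
  exact Submodule.sum_mem _ fun i _ => Submodule.smul_mem _ _ (hsingle i)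

private lemma stmt13_relint {m : ℕ} (S : Set (EuclideanSpace ℝ (Fin m)))
    (h : (0:EuclideanSpace ℝ (Fin m)) ∈ intrinsicInterior ℝ S) :
    ∃ ε > 0, ∀ v : EuclideanSpace ℝ (Fin m), v ∈ affineSpan ℝ S → ‖v‖ < ε → v ∈ S := by
  obtain ⟨y0, hy0int, hy0⟩ := mem_intrinsicInterior.1 h
  rw [mem_interior_iff_mem_nhds, Metric.mem_nhds_iff] at hy0int
  obtain ⟨ε, εpos, hball⟩ := hy0int
  refine ⟨ε, εpos, fun v hv hvε => ?_⟩
  have : (⟨v, hv⟩ : affineSpan ℝ S) ∈ Metric.ball y0 ε := by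
    rw [Metric.mem_ball, Subtype.dist_eq, hy0]
    simpa [dist_eq_norm] using hvε
  exact hball this

private lemma stmt13_abs_bd (p t M : ℝ) (h0 : 0 ≤ t) (hM : t ≤ M) :
    -(|p| * M) ≤ p * t ∧ p * t ≤ |p| * M := by
  have h1 := neg_abs_le p
  have h2 := le_abs_self p
  have h3 := abs_nonneg p
  constructor <;> nlinarith

set_option maxHeartbeats 1000000 in
/-- Boundedness of the dual sequence: if `0 ∈ relint(AP - b)`, `yⁱ ∈ ỹ⁰ + range A`, and
`‖A x(yⁱ, zⁱ) - b‖ → 0`, then `{yⁱ}` is bounded. -/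
theorem stmt13 {n m : ℕ} (f : EuclideanSpace ℝ (Fin n) → ℝ)
    (A : EuclideanSpace ℝ (Fin n) →L[ℝ] EuclideanSpace ℝ (Fin m))
    (b : EuclideanSpace ℝ (Fin m)) (ℓ u : Fin n → ℝ)
    (P : Set (EuclideanSpace ℝ (Fin n))) (Γ p γ L : ℝ)
    (K : EuclideanSpace ℝ (Fin n) → EuclideanSpace ℝ (Fin n) → EuclideanSpace ℝ (Fin m) → ℝ)
    (xmin : EuclideanSpace ℝ (Fin m) → EuclideanSpace ℝ (Fin n) → EuclideanSpace ℝ (Fin n))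
    (ytilde0 : EuclideanSpace ℝ (Fin m))
    (y : ℕ → EuclideanSpace ℝ (Fin m)) (z : ℕ → EuclideanSpace ℝ (Fin n))
    (hP : P = {x | ∀ i, x i ∈ Set.Icc (ℓ i) (u i)})
    (hlu : ∀ i, ℓ i < u i)
    (hrelint : (0 : EuclideanSpace ℝ (Fin m)) ∈
      intrinsicInterior ℝ ((fun x => A x - b) '' P))
    (hf : Differentiable ℝ f)
    (hfL : ∀ x x', ‖gradient f x - gradient f x'‖ ≤ L * ‖x - x'‖)
    (hΓ : 0 < Γ) (hpγ : 0 < p + γ)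
    (hK : ∀ x z' y', K x z' y' = f x + (inner ℝ y' (A x - b) : ℝ)
      + Γ / 2 * ‖A x - b‖ ^ 2 + p / 2 * ‖x - z'‖ ^ 2)
    (hsc : ∀ y' z', StrongConvexOn P (p + γ) (fun x => K x z' y'))
    (hxmin : ∀ y' z', xmin y' z' ∈ P ∧ IsMinOn (fun x => K x z' y') P (xmin y' z'))
    (hyrange : ∀ i : ℕ, ∃ w, y i = ytilde0 + A w)
    (hzP : ∀ i : ℕ, z i ∈ P)
    (hres : Filter.Tendsto (fun i => ‖A (xmin (y i) (z i)) - b‖) Filter.atTop (nhds 0)) :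
    ∃ R : ℝ, ∀ i, ‖y i‖ ≤ R := by
  classical
  set S := (fun x => A x - b) '' P with hS
  have hPcomp : IsCompact P := stmt13_compact ℓ u P hP
  have h0S : (0 : EuclideanSpace ℝ (Fin m)) ∈ S := intrinsicInterior_subset hrelint
  obtain ⟨x00, hx00P, hx00⟩ := h0S
  have hbx00 : b = A x00 := by
    have h0 : A x00 - b = 0 := hx00
    exact (sub_eq_zero.1 h0).symm
  -- bounds on the compact box
  obtain ⟨Cf, hCf⟩ : ∃ C, ∀ x ∈ P, |f x| ≤ C := by
    obtain ⟨C, hC⟩ := hPcomp.exists_bound_of_continuousOn hf.continuous.continuousOn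
    exact ⟨C, fun x hx => hC x hx⟩
  obtain ⟨Ca, hCa⟩ : ∃ C, ∀ x ∈ P, ‖A x - b‖ ≤ C := by
    obtain ⟨C, hC⟩ := hPcomp.exists_bound_of_continuousOn
      ((A.continuous.sub continuous_const).continuousOn)
    exact ⟨C, fun x hx => hC x hx⟩
  obtain ⟨Cp, hCp⟩ : ∃ C, ∀ x ∈ P, ‖x‖ ≤ C := by
    obtain ⟨C, hC⟩ := hPcomp.exists_bound_of_continuousOn continuous_id.continuousOn
    exact ⟨C, fun x hx => hC x hx⟩
  have hCf0 : 0 ≤ Cf := le_trans (abs_nonneg _) (hCf _ hx00P)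
  have hCa0 : 0 ≤ Ca := le_trans (norm_nonneg _) (hCa _ hx00P)
  have hCp0 : 0 ≤ Cp := le_trans (norm_nonneg _) (hCp _ hx00P)
  set C : ℝ := 2*Cf + Γ/2*Ca^2 + |p| * (2*Cp)^2 with hCdef
  have hC0 : 0 ≤ C := by
    have := abs_nonneg p
    positivity
  -- key variational inequality
  have hkey : ∀ i, ∀ x ∈ P,
      (inner ℝ (y i) (A x - b) : ℝ) ≥ inner ℝ (y i) (A (xmin (y i) (z i)) - b) - C := by
    intro i x hx
    obtain ⟨hxiP, hmin⟩ := hxmin (y i) (z i)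
    set xi := xmin (y i) (z i) with hxi
    have h1 : K xi (z i) (y i) ≤ K x (z i) (y i) := hmin hx
    rw [hK, hK] at h1
    have b1 := abs_le.1 (hCf _ hxiP)
    have b2 := abs_le.1 (hCf _ hx)
    have b4 : ‖A x - b‖ ^ 2 ≤ Ca ^ 2 := by
      have := hCa _ hx
      nlinarith [norm_nonneg (A x - b)]
    have b3 : (0:ℝ) ≤ ‖A xi - b‖ ^ 2 := sq_nonneg _
    have b5 : ‖xi - z i‖ ^ 2 ≤ (2*Cp) ^ 2 := by
      have h5 : ‖xi - z i‖ ≤ 2 * Cp := by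
        calc ‖xi - z i‖ ≤ ‖xi‖ + ‖z i‖ := norm_sub_le _ _
        _ ≤ 2 * Cp := by have := hCp _ hxiP; have := hCp _ (hzP i); linarith
      nlinarith [norm_nonneg (xi - z i)]
    have b6 : ‖x - z i‖ ^ 2 ≤ (2*Cp) ^ 2 := by
      have h6 : ‖x - z i‖ ≤ 2 * Cp := by
        calc ‖x - z i‖ ≤ ‖x‖ + ‖z i‖ := norm_sub_le _ _
        _ ≤ 2 * Cp := by have := hCp _ hx; have := hCp _ (hzP i); linarith
      nlinarith [norm_nonneg (x - z i)]
    have g2 : Γ/2*‖A xi - b‖^2 - Γ/2*‖A x - b‖^2 ≥ -(Γ/2*Ca^2) := by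
      have h2a : Γ/2*‖A x - b‖^2 ≤ Γ/2*Ca^2 :=
        mul_le_mul_of_nonneg_left b4 (by positivity)
      have h2b : 0 ≤ Γ/2*‖A xi - b‖^2 := by positivity
      linarith
    have g3 : p/2*‖xi - z i‖^2 - p/2*‖x - z i‖^2 ≥ -(|p| * (2*Cp)^2) := by
      obtain ⟨h3a, _⟩ := stmt13_abs_bd (p/2) (‖xi - z i‖^2) ((2*Cp)^2) (sq_nonneg _) b5
      obtain ⟨_, h3b⟩ := stmt13_abs_bd (p/2) (‖x - z i‖^2) ((2*Cp)^2) (sq_nonneg _) b6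
      rw [abs_div, abs_two] at h3a h3b
      linarith
    rw [hCdef]
    linarith
  -- span facts
  have hAspan : ∀ w, A w ∈ vectorSpan ℝ S := fun w => stmt13_span A b ℓ u P hP hlu w
  have h0aff : (0 : EuclideanSpace ℝ (Fin m)) ∈ affineSpan ℝ S :=
    subset_affineSpan ℝ S (intrinsicInterior_subset hrelint)
  have hmemaff : ∀ v, v ∈ vectorSpan ℝ S → v ∈ affineSpan ℝ S := by
    intro v hv
    have hd : v ∈ (affineSpan ℝ S).direction := by rwa [direction_affineSpan]
    have := AffineSubspace.vadd_mem_of_mem_direction hd h0aff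
    simpa using this
  obtain ⟨ε, εpos, hball⟩ := stmt13_relint S hrelint
  set δ : ℝ := ε/2 with hδ
  have δpos : 0 < δ := by positivity
  -- orthogonal decomposition of ytilde0
  obtain ⟨a, ha, c, hc, hy0dec⟩ := (vectorSpan ℝ S).exists_add_mem_mem_orthogonal ytilde0
  have hq : ∀ i, ∃ q ∈ vectorSpan ℝ S, y i = q + c := by
    intro i
    obtain ⟨w, hw⟩ := hyrange i
    exact ⟨a + A w, Submodule.add_mem _ ha (hAspan w), by rw [hw, hy0dec]; abel⟩
  have hAxib : ∀ i, A (xmin (y i) (z i)) - b ∈ vectorSpan ℝ S := by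
    intro i
    have : A (xmin (y i) (z i)) - b = A (xmin (y i) (z i) - x00) := by
      rw [map_sub, ← hbx00]
    rw [this]; exact hAspan _
  have hcperp : ∀ v ∈ vectorSpan ℝ S, (inner ℝ c v : ℝ) = 0 := by
    intro v hv
    rw [real_inner_comm]
    exact (Submodule.mem_orthogonal _ _).1 hc v hv
  -- the bound for indices with small residual
  set R₀ : ℝ := 2*C/δ + ‖c‖ with hR₀
  have hR₀0 : 0 ≤ R₀ := add_nonneg (div_nonneg (by linarith) δpos.le) (norm_nonneg _)
  have hbound : ∀ i, ‖A (xmin (y i) (z i)) - b‖ ≤ δ/2 → ‖y i‖ ≤ R₀ := by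
    intro i hres_i
    obtain ⟨q, hqmem, hqeq⟩ := hq i
    have hyle : ‖y i‖ ≤ ‖q‖ + ‖c‖ := by rw [hqeq]; exact norm_add_le _ _
    by_cases hq0 : q = 0
    · rw [hq0] at hyle; simp at hyle
      have : (0:ℝ) ≤ 2*C/δ := div_nonneg (by linarith) δpos.le
      rw [hR₀]; linarith
    · have hqn : (0:ℝ) < ‖q‖ := norm_pos_iff.2 hq0
      set v : EuclideanSpace ℝ (Fin m) := -(δ/‖q‖) • q with hv
      have hvspan : v ∈ vectorSpan ℝ S := Submodule.smul_mem _ _ hqmem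
      have hvnorm : ‖v‖ = δ := by
        rw [hv, norm_smul, Real.norm_eq_abs, abs_neg, abs_div, abs_of_pos δpos,
          abs_of_pos hqn]
        field_simp
      have hvS : v ∈ S := hball v (hmemaff v hvspan) (by rw [hvnorm, hδ]; linarith)
      obtain ⟨x, hxP, hxv⟩ := hvS
      have h2 : (inner ℝ (y i) v : ℝ) ≥ inner ℝ (y i) (A (xmin (y i) (z i)) - b) - C := by
        have := hkey i x hxP
        simp only at hxv
        rwa [hxv] at this
      have hyw : ∀ w₀, w₀ ∈ vectorSpan ℝ S → (inner ℝ (y i) w₀ : ℝ) = inner ℝ q w₀ := by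
        intro w₀ hw₀
        have : y i = q + c := hqeq
        rw [this, inner_add_left, hcperp w₀ hw₀, add_zero]
      -- LHS = -δ‖q‖
      have hL : (inner ℝ (y i) v : ℝ) = -(δ * ‖q‖) := by
        rw [hyw v hvspan, hv, real_inner_smul_right, real_inner_self_eq_norm_sq]
        field_simp
      -- RHS ≥ -‖q‖ * (δ/2) - C
      have hR : (inner ℝ (y i) (A (xmin (y i) (z i)) - b) : ℝ) ≥ -(‖q‖ * (δ/2)) := by
        rw [hyw _ (hAxib i)]
        have h4 : ‖q‖ * ‖A (xmin (y i) (z i)) - b‖ ≤ ‖q‖ * (δ/2) :=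
          mul_le_mul_of_nonneg_left hres_i hqn.le
        have h5 := neg_abs_le (inner ℝ q (A (xmin (y i) (z i)) - b) : ℝ)
        have h3 := abs_real_inner_le_norm q (A (xmin (y i) (z i)) - b)
        linarith
      rw [hL] at h2
      have hqbd : ‖q‖ ≤ 2*C/δ := by
        rw [le_div_iff₀ δpos]
        nlinarith
      rw [hR₀]; linarith
  -- split the sequence
  obtain ⟨N, hN⟩ : ∃ N : ℕ, ∀ i ≥ N, ‖A (xmin (y i) (z i)) - b‖ ≤ δ/2 := by
    have hev : ∀ᶠ i in Filter.atTop, ‖A (xmin (y i) (z i)) - b‖ < δ/2 :=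
      hres.eventually_lt_const (by positivity)
    obtain ⟨N, hN⟩ := Filter.eventually_atTop.1 hev
    exact ⟨N, fun i hi => (hN i hi).le⟩
  refine ⟨R₀ + ∑ j ∈ Finset.range N, ‖y j‖, fun i => ?_⟩
  have hsum0 : (0:ℝ) ≤ ∑ j ∈ Finset.range N, ‖y j‖ :=
    Finset.sum_nonneg fun j _ => norm_nonneg _
  rcases lt_or_ge i N with hi | hi
  · have : ‖y i‖ ≤ ∑ j ∈ Finset.range N, ‖y j‖ :=
      Finset.single_le_sum (fun j _ => norm_nonneg (y j)) (Finset.mem_range.2 hi)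
    linarith
  · have := hbound i (hN i hi)
    linarith
end
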